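/- arXiv:2203.16485 — 3 statements merged into one kernel-verified Lean document; each statement's English description precedes it below -/
import Mathlib

section
/- Consider a single affine-control system ẋ = F₀(x) + F(x)u on ℝⁿ with fixed parameter θ ∈ Θ (F₀, F Lipschitz), and a sequence of controls (u_m) ⊂ L²([0,1],ℝ^k) with u_m ⇀ u_∞ weakly in L². Let x_m^θ be the solution corresponding to u_m. Then x_m^θ → x_∞^θ in the C⁰([0,1],ℝⁿ) norm as m → ∞. -/
open MeasureTheory Set Filter Topology

noncomputable section

variable {n d k : ℕ}


/-- Cauchy–Schwarz for real integrals. -/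
lemma cs2 {ν : Measure ℝ} (f g : ℝ → ℝ) (hf : MemLp f 2 ν) (hg : MemLp g 2 ν) :
    ∫ t, f t * g t ∂ν ≤ Real.sqrt (∫ t, f t ^ 2 ∂ν) * Real.sqrt (∫ t, g t ^ 2 ∂ν) := by
  haveI : Fact ((1:ENNReal) ≤ 2) := ⟨one_le_two⟩
  set F : Lp ℝ 2 ν := hf.toLp f with hF
  set G : Lp ℝ 2 ν := hg.toLp g with hG
  have hFc : (F : ℝ → ℝ) =ᵐ[ν] f := hf.coeFn_toLp
  have hGc : (G : ℝ → ℝ) =ᵐ[ν] g := hg.coeFn_toLp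
  have hFF : (inner ℝ F F : ℝ) = ∫ t, f t ^ 2 ∂ν := by
    rw [MeasureTheory.L2.inner_def]
    refine integral_congr_ae ?_
    filter_upwards [hFc] with t ht
    simp [ht, RCLike.inner_apply, starRingEnd_apply, sq]
  have hGG : (inner ℝ G G : ℝ) = ∫ t, g t ^ 2 ∂ν := by
    rw [MeasureTheory.L2.inner_def]
    refine integral_congr_ae ?_
    filter_upwards [hGc] with t ht
    simp [ht, RCLike.inner_apply, starRingEnd_apply, sq]
  have hFG : (inner ℝ F G : ℝ) = ∫ t, f t * g t ∂ν := by
    rw [MeasureTheory.L2.inner_def]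
    refine integral_congr_ae ?_
    filter_upwards [hFc, hGc] with t h1 h2
    simp [h1, h2, RCLike.inner_apply, starRingEnd_apply, mul_comm]
  have h1 : (inner ℝ F G : ℝ) ≤ ‖F‖ * ‖G‖ := real_inner_le_norm F G
  have hFn : ‖F‖ = Real.sqrt (∫ t, f t ^ 2 ∂ν) := by
    rw [← Real.sqrt_sq (norm_nonneg F), ← real_inner_self_eq_norm_sq, hFF]
  have hGn : ‖G‖ = Real.sqrt (∫ t, g t ^ 2 ∂ν) := by
    rw [← Real.sqrt_sq (norm_nonneg G), ← real_inner_self_eq_norm_sq, hGG]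
  rw [← hFG, ← hFn, ← hGn]; exact h1

/-- A weakly convergent sequence in L² has uniformly bounded squared L² norms. -/
lemma l2_bound {k : ℕ} (u : ℕ → ℝ → EuclideanSpace ℝ (Fin k))
    (uinf : ℝ → EuclideanSpace ℝ (Fin k))
    (hu : ∀ m, MemLp (u m) 2 (volume.restrict (Icc (0 : ℝ) 1)))
    (hweak : ∀ v : ℝ → EuclideanSpace ℝ (Fin k),
      MemLp v 2 (volume.restrict (Icc (0 : ℝ) 1)) →
      Tendsto (fun m => ∫ t in Icc (0 : ℝ) 1, (inner ℝ (v t) (u m t) : ℝ)) atTop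
        (𝓝 (∫ t in Icc (0 : ℝ) 1, (inner ℝ (v t) (uinf t) : ℝ)))) :
    ∃ C : ℝ, 0 ≤ C ∧ ∀ m, ∫ t in Icc (0 : ℝ) 1, ‖u m t‖ ^ 2 ≤ C := by
  haveI : Fact ((1:ENNReal) ≤ 2) := ⟨one_le_two⟩
  set μ := volume.restrict (Icc (0 : ℝ) 1) with hμ
  set U : ℕ → Lp (EuclideanSpace ℝ (Fin k)) 2 μ := fun m => (hu m).toLp (u m) with hU
  set g : ℕ → Lp (EuclideanSpace ℝ (Fin k)) 2 μ →L[ℝ] ℝ := fun m => innerSL ℝ (U m) with hg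
  have hpt : ∀ v, ∃ C, ∀ m, ‖g m v‖ ≤ C := by
    intro v
    have hv : MemLp (v : ℝ → EuclideanSpace ℝ (Fin k)) 2 μ := Lp.memLp v
    have ht := (hweak _ hv).norm
    have heq : ∀ m, g m v = ∫ t in Icc (0 : ℝ) 1, (inner ℝ (v t) (u m t) : ℝ) := by
      intro m
      show (inner ℝ (U m) v : ℝ) = _
      rw [MeasureTheory.L2.inner_def]
      refine integral_congr_ae ?_
      filter_upwards [(hu m).coeFn_toLp] with t h1
      rw [show ((U m : ℝ → EuclideanSpace ℝ (Fin k)) t) = u m t from h1, real_inner_comm]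
    have hb := ht.bddAbove_range
    obtain ⟨C, hC⟩ := hb
    exact ⟨C, fun m => by rw [heq m]; exact hC ⟨m, rfl⟩⟩
  obtain ⟨C', hC'⟩ := banach_steinhaus hpt
  refine ⟨C' ^ 2 + 1, by positivity, fun m => ?_⟩
  have h1 : ‖U m‖ ≤ C' := by
    have := hC' m
    rwa [hg, innerSL_apply_norm] at this
  have h2 : ∫ t in Icc (0 : ℝ) 1, ‖u m t‖ ^ 2 = ‖U m‖ ^ 2 := by
    rw [← real_inner_self_eq_norm_sq, MeasureTheory.L2.inner_def]
    refine (integral_congr_ae ?_).symm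
    filter_upwards [(hu m).coeFn_toLp] with t h1
    rw [show ((U m : ℝ → EuclideanSpace ℝ (Fin k)) t) = u m t from h1,
      real_inner_self_eq_norm_sq]
  rw [h2]
  have : ‖U m‖ ^ 2 ≤ C' ^ 2 := by
    have h0 : (0:ℝ) ≤ ‖U m‖ := norm_nonneg _
    nlinarith
  linarith

/-- Grönwall-type estimate after Cauchy–Schwarz. -/
lemma gronwall_aux {ψ : ℝ → ℝ} (hψc : Continuous ψ) (hψ0 : ∀ t, 0 ≤ ψ t) {a B : ℝ}
    (ha : 0 ≤ a) (hB : 0 ≤ B)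
    (h : ∀ t ∈ Icc (0:ℝ) 1, ψ t ≤ a + B * Real.sqrt (∫ s in (0:ℝ)..t, ψ s ^ 2)) :
    ∀ t ∈ Icc (0:ℝ) 1, ψ t ≤ a * (1 + B * Real.sqrt 2 * Real.exp (B ^ 2)) := by
  set W : ℝ → ℝ := fun t => ∫ s in (0:ℝ)..t, ψ s ^ 2 with hWdef
  have hq : Continuous fun s => ψ s ^ 2 := hψc.pow 2
  have hW' : ∀ t : ℝ, HasDerivAt W (ψ t ^ 2) t := by
    intro t
    exact intervalIntegral.integral_hasDerivAt_right (hq.intervalIntegrable _ _)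
      (hq.stronglyMeasurableAtFilter _ _) hq.continuousAt
  have hWnn : ∀ t ∈ Icc (0:ℝ) 1, 0 ≤ W t := by
    intro t ht
    exact intervalIntegral.integral_nonneg ht.1 (fun s _ => sq_nonneg _)
  have hWc : ContinuousOn W (Icc 0 1) := fun t _ => ((hW' t).continuousAt).continuousWithinAt
  have key : ∀ t ∈ Icc (0:ℝ) 1, ‖W t‖ ≤ gronwallBound 0 (2 * B ^ 2) (2 * a ^ 2) t := by
    have bound : ∀ s ∈ Ico (0:ℝ) 1, ‖ψ s ^ 2‖ ≤ 2 * B ^ 2 * ‖W s‖ + 2 * a ^ 2 := ?_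
    · intro t ht
      have := norm_le_gronwallBound_of_norm_deriv_right_le hWc
        (fun x _ => ((hW' x).hasDerivWithinAt))
        (show ‖W 0‖ ≤ 0 by simp [hWdef, intervalIntegral.integral_same]) bound t ht
      simpa using this
    intro s hs
    have hs' : s ∈ Icc (0:ℝ) 1 := ⟨hs.1, hs.2.le⟩
    have h1 := h s hs'
    have hWs : 0 ≤ W s := hWnn s hs'
    set r := Real.sqrt (W s) with hr
    have hr0 : 0 ≤ r := Real.sqrt_nonneg _
    have hr2 : r ^ 2 = W s := Real.sq_sqrt hWs
    have hnorm : ‖W s‖ = W s := abs_of_nonneg hWs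
    have : ψ s ^ 2 ≤ 2 * a ^ 2 + 2 * B ^ 2 * W s := by
      have h0 := hψ0 s
      nlinarith [sq_nonneg (a - B * r), sq_nonneg (ψ s)]
    calc ‖ψ s ^ 2‖ = ψ s ^ 2 := abs_of_nonneg (sq_nonneg _)
      _ ≤ 2 * a ^ 2 + 2 * B ^ 2 * W s := this
      _ = 2 * B ^ 2 * ‖W s‖ + 2 * a ^ 2 := by rw [hnorm]; ring
  -- bound gronwallBound
  have hexp : ∀ K : ℝ, 0 ≤ K → Real.exp K - 1 ≤ K * Real.exp K := by
    intro K hK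
    have h1 : 1 + -K ≤ Real.exp (-K) := by
      have := Real.add_one_le_exp (-K); linarith
    have h2 : (1 + -K) * Real.exp K ≤ Real.exp (-K) * Real.exp K :=
      mul_le_mul_of_nonneg_right h1 (Real.exp_pos K).le
    rw [← Real.exp_add, neg_add_cancel, Real.exp_zero] at h2
    nlinarith [Real.exp_pos K]
  have hgb : ∀ t ∈ Icc (0:ℝ) 1,
      gronwallBound 0 (2 * B ^ 2) (2 * a ^ 2) t ≤ 2 * a ^ 2 * Real.exp (2 * B ^ 2) := by
    intro t ht
    set K := 2 * B ^ 2 with hKdef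
    have hK0 : 0 ≤ K := by positivity
    rcases eq_or_lt_of_le hK0 with hK | hK
    · rw [← hK, gronwallBound_K0]
      have : 2 * a ^ 2 * t ≤ 2 * a ^ 2 := by nlinarith [ht.1, ht.2, sq_nonneg a]
      simpa [Real.exp_zero] using this
    · rw [gronwallBound_of_K_ne_0 hK.ne']
      have h1 : Real.exp (K * t) ≤ Real.exp K := by
        apply Real.exp_le_exp.2; nlinarith [ht.1, ht.2]
      have h2 : Real.exp (K * t) - 1 ≤ K * Real.exp K := by
        have := hexp K hK0
        have h3 : (0:ℝ) ≤ Real.exp (K*t) := (Real.exp_pos _).le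
        nlinarith
      have h4 : 2 * a ^ 2 / K * (Real.exp (K * t) - 1) ≤ 2 * a ^ 2 * Real.exp K := by
        rw [div_mul_eq_mul_div, div_le_iff₀ hK]
        have h5 : (0:ℝ) ≤ 2 * a ^ 2 := by positivity
        calc 2 * a ^ 2 * (Real.exp (K * t) - 1) ≤ 2 * a ^ 2 * (K * Real.exp K) :=
              mul_le_mul_of_nonneg_left h2 h5
          _ = 2 * a ^ 2 * Real.exp K * K := by ring
      simpa using h4
  intro t ht
  have h1 := h t ht
  have h2 : W t ≤ 2 * a ^ 2 * Real.exp (2 * B ^ 2) :=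
    le_trans (le_abs_self _) (le_trans (key t ht) (hgb t ht))
  have h3 : Real.sqrt (W t) ≤ Real.sqrt 2 * a * Real.exp (B ^ 2) := by
    rw [show Real.sqrt 2 * a * Real.exp (B ^ 2)
        = Real.sqrt ((Real.sqrt 2 * a * Real.exp (B ^ 2)) ^ 2) from
      (Real.sqrt_sq (by positivity)).symm]
    apply Real.sqrt_le_sqrt
    have e1 : Real.sqrt 2 ^ 2 = 2 := Real.sq_sqrt (by norm_num)
    have e2 : Real.exp (2 * B ^ 2) = Real.exp (B ^ 2) * Real.exp (B ^ 2) := by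
      rw [← Real.exp_add]; ring_nf
    have e3 : (Real.sqrt 2 * a * Real.exp (B ^ 2)) ^ 2 = 2 * a ^ 2 * Real.exp (2 * B ^ 2) := by
      rw [mul_pow, mul_pow, e1, e2]; ring
    linarith
  have h4 : B * Real.sqrt (W t) ≤ B * (Real.sqrt 2 * a * Real.exp (B ^ 2)) :=
    mul_le_mul_of_nonneg_left h3 hB
  calc ψ t ≤ a + B * Real.sqrt (W t) := h1
    _ ≤ a + B * (Real.sqrt 2 * a * Real.exp (B ^ 2)) := by linarith
    _ = a * (1 + B * Real.sqrt 2 * Real.exp (B ^ 2)) := by ring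

/-- Pointwise convergence to 0 plus equicontinuity gives uniform smallness. -/
lemma unif_of_equicont {E : Type*} [NormedAddCommGroup E] {G : ℕ → ℝ → E}
    (hpt : ∀ t ∈ Icc (0:ℝ) 1, Tendsto (fun m => G m t) atTop (𝓝 0))
    (hec : ∀ ε > (0:ℝ), ∃ δ > (0:ℝ), ∀ m, ∀ t ∈ Icc (0:ℝ) 1, ∀ t' ∈ Icc (0:ℝ) 1,
      |t - t'| ≤ δ → ‖G m t - G m t'‖ ≤ ε) :
    ∀ ε > (0:ℝ), ∀ᶠ m in atTop, ∀ t ∈ Icc (0:ℝ) 1, ‖G m t‖ ≤ ε := by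
  intro ε hε
  obtain ⟨δ, hδ, hδ'⟩ := hec (ε/2) (by linarith)
  obtain ⟨N, hN⟩ := exists_nat_gt (1/δ)
  have hN0 : (0:ℝ) < N := lt_trans (by positivity) hN
  have hNδ : 1 / (N:ℝ) ≤ δ := by
    rw [div_le_iff₀ hN0]
    rw [div_lt_iff₀ hδ] at hN
    nlinarith
  have hgrid : ∀ j ∈ Finset.range (N+1), (j:ℝ)/N ∈ Icc (0:ℝ) 1 := by
    intro j hj
    have hj' : (j:ℝ) ≤ N := by
      exact_mod_cast Nat.lt_succ_iff.1 (Finset.mem_range.1 hj)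
    constructor
    · positivity
    · rw [div_le_one hN0]; exact hj'
  have hev : ∀ᶠ m in atTop, ∀ j ∈ Finset.range (N+1), ‖G m ((j:ℝ)/N)‖ ≤ ε/2 := by
    rw [eventually_all_finset]
    intro j hj
    have := (hpt _ (hgrid j hj)).norm
    simp only [norm_zero] at this
    exact this.eventually_le_const (by linarith)
  filter_upwards [hev] with m hm t ht
  set j : ℕ := ⌊t * N⌋₊ with hj
  have htN : 0 ≤ t * N := mul_nonneg ht.1 hN0.le
  have hjle : (j:ℝ) ≤ t * N := Nat.floor_le htN
  have hjlt : t * N < j + 1 := Nat.lt_floor_add_one _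
  have hjN : j ≤ N := by
    have : (j:ℝ) ≤ N := le_trans hjle (by nlinarith [ht.2])
    exact_mod_cast this
  have hjmem : j ∈ Finset.range (N+1) := Finset.mem_range.2 (Nat.lt_succ_of_le hjN)
  have hdist : |t - (j:ℝ)/N| ≤ δ := by
    rw [abs_le]
    constructor
    · have : (j:ℝ)/N ≤ t + δ := by
        rw [div_le_iff₀ hN0]
        nlinarith
      linarith
    · have : t - (j:ℝ)/N ≤ 1/N := by
        rw [sub_le_iff_le_add, ← add_div, le_div_iff₀ hN0]
        push_cast
        linarith
      linarith
  calc ‖G m t‖ = ‖(G m t - G m ((j:ℝ)/N)) + G m ((j:ℝ)/N)‖ := by rw [sub_add_cancel]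
    _ ≤ ‖G m t - G m ((j:ℝ)/N)‖ + ‖G m ((j:ℝ)/N)‖ := norm_add_le _ _
    _ ≤ ε/2 + ε/2 := add_le_add (hδ' m t ht _ (hgrid j hjmem) hdist) (hm j hjmem)
    _ = ε := by ring

lemma memL2_sq_integrable {ν : Measure ℝ} {E : Type*} [NormedAddCommGroup E]
    [InnerProductSpace ℝ E] {f : ℝ → E} (hf : MemLp f 2 ν) :
    Integrable (fun s => ‖f s‖ ^ 2) ν := by
  haveI : Fact ((1:ENNReal) ≤ 2) := ⟨one_le_two⟩
  have h := MeasureTheory.L2.integrable_inner (𝕜 := ℝ) (hf.toLp f) (hf.toLp f)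
  refine h.congr ?_
  filter_upwards [hf.coeFn_toLp] with s hs
  rw [hs, real_inner_self_eq_norm_sq]

lemma sum_abs_le {k : ℕ} (y : EuclideanSpace ℝ (Fin k)) :
    ∑ i, |y i| ≤ Real.sqrt k * ‖y‖ := by
  have h1 : (∑ i, |y i|) ^ 2 ≤ (k : ℝ) * ∑ i, |y i| ^ 2 := by
    have := sq_sum_le_card_mul_sum_sq (s := (Finset.univ : Finset (Fin k)))
      (f := fun i => |y i|)
    simpa using this
  have h2 : ‖y‖ ^ 2 = ∑ i, |y i| ^ 2 := by
    rw [EuclideanSpace.norm_eq, Real.sq_sqrt (by positivity)]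
    simp [Real.norm_eq_abs]
  have h3 : (∑ i, |y i|) ^ 2 ≤ (Real.sqrt k * ‖y‖) ^ 2 := by
    rw [mul_pow, Real.sq_sqrt (by positivity : (0:ℝ) ≤ (k:ℝ))]
    nlinarith [h1, h2]
  have h4 : 0 ≤ ∑ i, |y i| := Finset.sum_nonneg fun i _ => abs_nonneg _
  have h5 : 0 ≤ Real.sqrt k * ‖y‖ := by positivity
  nlinarith

lemma coord_memℒp {k : ℕ} {ν : Measure ℝ} {f : ℝ → EuclideanSpace ℝ (Fin k)}
    (hf : MemLp f 2 ν) (i : Fin k) : MemLp (fun s => f s i) 2 ν := by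
  have := (EuclideanSpace.proj (𝕜 := ℝ) i).comp_memLp' hf
  exact this

/-- `x` is the trajectory on `[0,1]` of the affine-control system
`ẋ(t) = F₀(x(t),θ) + Σᵢ uᵢ(t) Fᵢ(x(t),θ)`, `x(0) = x₀(θ)`,
written in integral (Carathéodory) form. -/
def IsTrajectory
    (F0 : EuclideanSpace ℝ (Fin n) → EuclideanSpace ℝ (Fin d) → EuclideanSpace ℝ (Fin n))
    (F : Fin k → EuclideanSpace ℝ (Fin n) → EuclideanSpace ℝ (Fin d) →
      EuclideanSpace ℝ (Fin n))
    (x0 : EuclideanSpace ℝ (Fin d) → EuclideanSpace ℝ (Fin n))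
    (u : ℝ → EuclideanSpace ℝ (Fin k)) (θ : EuclideanSpace ℝ (Fin d))
    (x : ℝ → EuclideanSpace ℝ (Fin n)) : Prop :=
  ContinuousOn x (Icc 0 1) ∧
    ∀ t ∈ Icc (0 : ℝ) 1,
      x t = x0 θ + ∫ s in (0 : ℝ)..t, (F0 (x s) θ + ∑ i, u s i • F i (x s) θ)

/-- The squared `L²([0,1])` norm of a control. -/
def l2sq (u : ℝ → EuclideanSpace ℝ (Fin k)) : ℝ :=
  ∫ t in Icc (0 : ℝ) 1, ‖u t‖ ^ 2

/-- Weak convergence `u_m ⇀ u_∞` in `L²([0,1],ℝ^k)`. -/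
def WeakL2 (u : ℕ → ℝ → EuclideanSpace ℝ (Fin k))
    (uinf : ℝ → EuclideanSpace ℝ (Fin k)) : Prop :=
  ∀ v : ℝ → EuclideanSpace ℝ (Fin k), MemLp v 2 (volume.restrict (Icc (0 : ℝ) 1)) →
    Tendsto (fun m => ∫ t in Icc (0 : ℝ) 1, (inner ℝ (v t) (u m t) : ℝ)) atTop
      (𝓝 (∫ t in Icc (0 : ℝ) 1, (inner ℝ (v t) (uinf t) : ℝ)))

set_option maxHeartbeats 2000000 in
/-- stability of a single affine-control system under weak convergence of
controls: if `u_m ⇀ u_∞` weakly in `L²([0,1],ℝ^k)`, then the corresponding solutions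
`x_m^θ` converge to `x_∞^θ` uniformly on `[0,1]`. -/
theorem single_trajectory_weak_to_C0 (n d k : ℕ)
    (Θ : Set (EuclideanSpace ℝ (Fin d))) (hΘ : IsCompact Θ)
    (F0 : EuclideanSpace ℝ (Fin n) → EuclideanSpace ℝ (Fin d) → EuclideanSpace ℝ (Fin n))
    (F : Fin k → EuclideanSpace ℝ (Fin n) → EuclideanSpace ℝ (Fin d) →
      EuclideanSpace ℝ (Fin n))
    (L : ℝ)
    (hF0 : ∀ x₁ x₂ θ₁ θ₂, θ₁ ∈ Θ → θ₂ ∈ Θ →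
      ‖F0 x₁ θ₁ - F0 x₂ θ₂‖ ≤ L * (‖x₁ - x₂‖ + ‖θ₁ - θ₂‖))
    (hF : ∀ i, ∀ x₁ x₂ θ₁ θ₂, θ₁ ∈ Θ → θ₂ ∈ Θ →
      ‖F i x₁ θ₁ - F i x₂ θ₂‖ ≤ L * (‖x₁ - x₂‖ + ‖θ₁ - θ₂‖))
    (x0 : EuclideanSpace ℝ (Fin d) → EuclideanSpace ℝ (Fin n))
    (hx0 : ContinuousOn x0 Θ)
    (θ : EuclideanSpace ℝ (Fin d)) (hθ : θ ∈ Θ)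
    (u : ℕ → ℝ → EuclideanSpace ℝ (Fin k)) (uinf : ℝ → EuclideanSpace ℝ (Fin k))
    (hu : ∀ m, MemLp (u m) 2 (volume.restrict (Icc (0 : ℝ) 1)))
    (huinf : MemLp uinf 2 (volume.restrict (Icc (0 : ℝ) 1)))
    (hweak : WeakL2 u uinf)
    (x : ℕ → ℝ → EuclideanSpace ℝ (Fin n)) (xinf : ℝ → EuclideanSpace ℝ (Fin n))
    (hx : ∀ m, IsTrajectory F0 F x0 (u m) θ (x m))
    (hxinf : IsTrajectory F0 F x0 uinf θ xinf) :
    TendstoUniformlyOn (fun m t => x m t) xinf atTop (Icc (0 : ℝ) 1) := by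
  classical
  obtain ⟨C, hC0, hCb⟩ := l2_bound u uinf hu hweak
  set μ := volume.restrict (Icc (0:ℝ) 1) with hμdef
  haveI hfin : IsFiniteMeasure μ := by
    refine ⟨?_⟩
    rw [hμdef, Measure.restrict_apply_univ]
    simp [Real.volume_Icc]
  set L' := max L 0 with hL'def
  have hL' : 0 ≤ L' := le_max_right _ _
  have hF0' : ∀ y z, ‖F0 y θ - F0 z θ‖ ≤ L' * ‖y - z‖ := by
    intro y z
    have h := hF0 y z θ θ hθ hθ
    simp only [sub_self, norm_zero, add_zero] at h
    exact h.trans (mul_le_mul_of_nonneg_right (le_max_left _ _) (norm_nonneg _))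
  have hFi' : ∀ i y z, ‖F i y θ - F i z θ‖ ≤ L' * ‖y - z‖ := by
    intro i y z
    have h := hF i y z θ θ hθ hθ
    simp only [sub_self, norm_zero, add_zero] at h
    exact h.trans (mul_le_mul_of_nonneg_right (le_max_left _ _) (norm_nonneg _))
  have hF0c : Continuous fun y => F0 y θ := by
    refine (LipschitzWith.of_dist_le_mul (K := Real.toNNReal L') fun y z => ?_).continuous
    rw [dist_eq_norm, dist_eq_norm, Real.coe_toNNReal _ hL']
    exact hF0' y z
  have hFic : ∀ i, Continuous fun y => F i y θ := by
    intro i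
    refine (LipschitzWith.of_dist_le_mul (K := Real.toNNReal L') fun y z => ?_).continuous
    rw [dist_eq_norm, dist_eq_norm, Real.coe_toNNReal _ hL']
    exact hFi' i y z
  -- clamp to [0,1]
  set r : ℝ → ℝ := fun t => max 0 (min t 1) with hrdef
  have hrc : Continuous r := continuous_const.max (continuous_id.min continuous_const)
  have hrmem : ∀ t, r t ∈ Icc (0:ℝ) 1 := fun t =>
    ⟨le_max_left _ _, max_le (by norm_num) (min_le_right _ _)⟩
  have hrid : ∀ t ∈ Icc (0:ℝ) 1, r t = t := by
    intro t ht
    simp only [hrdef]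
    rw [min_eq_left ht.2, max_eq_right ht.1]
  set X : ℕ → ℝ → EuclideanSpace ℝ (Fin n) := fun m t => x m (r t) with hXdef
  set Xinf : ℝ → EuclideanSpace ℝ (Fin n) := fun t => xinf (r t) with hXinfdef
  have hXc : ∀ m, Continuous (X m) := fun m => (hx m).1.comp_continuous hrc hrmem
  have hXinfc : Continuous Xinf := hxinf.1.comp_continuous hrc hrmem
  have hXeq : ∀ m, ∀ t ∈ Icc (0:ℝ) 1, X m t = x m t := by
    intro m t ht; simp only [hXdef]; rw [hrid t ht]
  have hXinfeq : ∀ t ∈ Icc (0:ℝ) 1, Xinf t = xinf t := by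
    intro t ht; simp only [hXinfdef]; rw [hrid t ht]
  -- bound M on the vector fields along xinf
  have hgMc : Continuous fun s => ∑ i, ‖F i (Xinf s) θ‖ :=
    continuous_finset_sum _ fun i _ => ((hFic i).comp hXinfc).norm
  obtain ⟨M0, hM0⟩ :=
    (isCompact_Icc (a := (0:ℝ)) (b := 1)).exists_bound_of_continuousOn hgMc.continuousOn
  set M := max M0 0 with hMdef
  have hMnn : 0 ≤ M := le_max_right _ _
  have hM : ∀ (i : Fin k) (s : ℝ), ‖F i (Xinf s) θ‖ ≤ M := by
    intro i s
    have h1 : Xinf s = Xinf (r s) := by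
      simp only [hXinfdef]; rw [hrid (r s) (hrmem s)]
    have h2 := hM0 (r s) (hrmem s)
    calc ‖F i (Xinf s) θ‖ = ‖F i (Xinf (r s)) θ‖ := by rw [← h1]
      _ ≤ ∑ j, ‖F j (Xinf (r s)) θ‖ :=
          Finset.single_le_sum (f := fun j => ‖F j (Xinf (r s)) θ‖)
            (fun j _ => norm_nonneg _) (Finset.mem_univ i)
      _ ≤ ‖∑ j, ‖F j (Xinf (r s)) θ‖‖ := le_abs_self _
      _ ≤ M0 := h2
      _ ≤ M := le_max_left _ _
  -- integrability of the sum-smul integrands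
  have hsumint : ∀ (w : ℝ → EuclideanSpace ℝ (Fin k)), MemLp w 2 μ →
      ∀ (V : Fin k → ℝ → EuclideanSpace ℝ (Fin n)), (∀ i, Continuous (V i)) →
      Integrable (fun s => ∑ i, w s i • V i s) μ := by
    intro w hw V hV
    apply integrable_finset_sum
    intro i _
    obtain ⟨Mi, hMi⟩ :=
      (isCompact_Icc (a := (0:ℝ)) (b := 1)).exists_bound_of_continuousOn (hV i).continuousOn
    have hwi : Integrable (fun s => w s i) μ := (coord_memℒp hw i).integrable one_le_two
    refine Integrable.mono' (hwi.abs.const_mul Mi)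
      (((coord_memℒp hw i).aestronglyMeasurable).smul (hV i).aestronglyMeasurable) ?_
    filter_upwards [ae_restrict_mem measurableSet_Icc] with s hs
    rw [norm_smul]
    calc ‖w s i‖ * ‖V i s‖ ≤ ‖w s i‖ * Mi := by
          exact mul_le_mul_of_nonneg_left (hMi s hs) (norm_nonneg _)
      _ = Mi * |w s i| := by rw [Real.norm_eq_abs]; ring
  have hIntF0 : ∀ (y : ℝ → EuclideanSpace ℝ (Fin n)), Continuous y →
      Integrable (fun s => F0 (y s) θ) μ := by
    intro y hy
    exact (hF0c.comp hy).integrableOn_Icc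
  have hII : ∀ (g : ℝ → EuclideanSpace ℝ (Fin n)), Integrable g μ →
      ∀ t' t : ℝ, t' ∈ Icc (0:ℝ) 1 → t ∈ Icc (0:ℝ) 1 → t' ≤ t →
      IntervalIntegrable g volume t' t := by
    intro g hg t' t ht' ht htt
    rw [intervalIntegrable_iff_integrableOn_Ioc_of_le htt]
    have hsub : Ioc t' t ⊆ Icc (0:ℝ) 1 := fun s hs =>
      ⟨le_trans ht'.1 hs.1.le, le_trans hs.2 ht.2⟩
    exact hg.mono_measure (Measure.restrict_mono hsub le_rfl)
  have hIIr : ∀ (g : ℝ → ℝ), Integrable g μ →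
      ∀ t' t : ℝ, t' ∈ Icc (0:ℝ) 1 → t ∈ Icc (0:ℝ) 1 → t' ≤ t →
      IntervalIntegrable g volume t' t := by
    intro g hg t' t ht' ht htt
    rw [intervalIntegrable_iff_integrableOn_Ioc_of_le htt]
    have hsub : Ioc t' t ⊆ Icc (0:ℝ) 1 := fun s hs =>
      ⟨le_trans ht'.1 hs.1.le, le_trans hs.2 ht.2⟩
    exact hg.mono_measure (Measure.restrict_mono hsub le_rfl)
  -- main integrands
  set Q : (ℝ → EuclideanSpace ℝ (Fin k)) → ℝ → EuclideanSpace ℝ (Fin n) :=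
    fun w s => ∑ i, w s i • F i (Xinf s) θ with hQdef
  have hQint : ∀ w, MemLp w 2 μ → Integrable (Q w) μ := fun w hw =>
    hsumint w hw _ fun i => (hFic i).comp hXinfc
  set G : ℕ → ℝ → EuclideanSpace ℝ (Fin n) :=
    fun m t => (∫ s in (0:ℝ)..t, Q (u m) s) - (∫ s in (0:ℝ)..t, Q uinf s) with hGdef
  set D : ℕ → ℝ → EuclideanSpace ℝ (Fin n) := fun m s =>
    (F0 (X m s) θ - F0 (Xinf s) θ) + ∑ i, u m s i • (F i (X m s) θ - F i (Xinf s) θ) with hDdef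
  have hDint : ∀ m, Integrable (D m) μ := fun m =>
    ((hIntF0 _ (hXc m)).sub (hIntF0 _ hXinfc)).add
      (hsumint _ (hu m) _ fun i => ((hFic i).comp (hXc m)).sub ((hFic i).comp hXinfc))
  -- decomposition
  have hsplit : ∀ m, ∀ t ∈ Icc (0:ℝ) 1,
      x m t - xinf t = (∫ s in (0:ℝ)..t, D m s) + G m t := by
    intro m t ht
    have h0t : Icc (0:ℝ) t ⊆ Icc (0:ℝ) 1 := Icc_subset_Icc le_rfl ht.2
    have hxm : x m t = x0 θ + ∫ s in (0:ℝ)..t,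
        (F0 (X m s) θ + ∑ i, u m s i • F i (X m s) θ) := by
      rw [(hx m).2 t ht]
      congr 1
      apply intervalIntegral.integral_congr
      intro s hs
      rw [uIcc_of_le ht.1] at hs
      simp only [hXeq m s (h0t hs)]
    have hxinfm : xinf t = x0 θ + ∫ s in (0:ℝ)..t, (F0 (Xinf s) θ + Q uinf s) := by
      rw [hxinf.2 t ht]
      congr 1
      apply intervalIntegral.integral_congr
      intro s hs
      rw [uIcc_of_le ht.1] at hs
      simp only [hQdef, hXinfeq s (h0t hs)]
    have hident : ∀ s : ℝ, F0 (X m s) θ + ∑ i, u m s i • F i (X m s) θ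
        = (D m s + Q (u m) s) + F0 (Xinf s) θ := by
      intro s
      simp only [hDdef, hQdef, smul_sub, Finset.sum_sub_distrib]
      abel
    have hID : IntervalIntegrable (D m) volume 0 t := hII _ (hDint m) 0 t ⟨le_rfl, one_pos.le⟩ ht ht.1
    have hIQm : IntervalIntegrable (Q (u m)) volume 0 t :=
      hII _ (hQint _ (hu m)) 0 t ⟨le_rfl, one_pos.le⟩ ht ht.1
    have hIQinf : IntervalIntegrable (Q uinf) volume 0 t :=
      hII _ (hQint _ huinf) 0 t ⟨le_rfl, one_pos.le⟩ ht ht.1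
    have hIF0inf : IntervalIntegrable (fun s => F0 (Xinf s) θ) volume 0 t :=
      hII _ (hIntF0 _ hXinfc) 0 t ⟨le_rfl, one_pos.le⟩ ht ht.1
    calc x m t - xinf t
        = (x0 θ + ∫ s in (0:ℝ)..t, (F0 (X m s) θ + ∑ i, u m s i • F i (X m s) θ))
          - (x0 θ + ∫ s in (0:ℝ)..t, (F0 (Xinf s) θ + Q uinf s)) := by rw [← hxm, ← hxinfm]
      _ = (∫ s in (0:ℝ)..t, (F0 (X m s) θ + ∑ i, u m s i • F i (X m s) θ))
          - (∫ s in (0:ℝ)..t, (F0 (Xinf s) θ + Q uinf s)) := add_sub_add_left_eq_sub _ _ _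
      _ = (∫ s in (0:ℝ)..t, ((D m s + Q (u m) s) + F0 (Xinf s) θ))
          - (∫ s in (0:ℝ)..t, (F0 (Xinf s) θ + Q uinf s)) := by
            rw [intervalIntegral.integral_congr (g := fun s => (D m s + Q (u m) s) + F0 (Xinf s) θ)
              (fun s _ => hident s)]
      _ = ((∫ s in (0:ℝ)..t, D m s) + (∫ s in (0:ℝ)..t, Q (u m) s)
            + (∫ s in (0:ℝ)..t, F0 (Xinf s) θ))
          - ((∫ s in (0:ℝ)..t, F0 (Xinf s) θ) + (∫ s in (0:ℝ)..t, Q uinf s)) := by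
            rw [intervalIntegral.integral_add (hID.add hIQm) hIF0inf,
              intervalIntegral.integral_add hID hIQm,
              intervalIntegral.integral_add hIF0inf hIQinf]
      _ = (∫ s in (0:ℝ)..t, D m s) + G m t := by simp only [hGdef]; abel
  -- L¹ bound on subintervals via Cauchy–Schwarz
  set Cinf := ∫ t in Icc (0:ℝ) 1, ‖uinf t‖ ^ 2 with hCinfdef
  have hCinf0 : (0:ℝ) ≤ Cinf := integral_nonneg fun s => sq_nonneg _
  have hL1 : ∀ (w : ℝ → EuclideanSpace ℝ (Fin k)), MemLp w 2 μ → ∀ Cw : ℝ,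
      (∫ s, ‖w s‖ ^ 2 ∂μ) ≤ Cw → ∀ t' t : ℝ, t' ∈ Icc (0:ℝ) 1 → t ∈ Icc (0:ℝ) 1 → t' ≤ t →
      ∫ s in t'..t, ‖w s‖ ≤ Real.sqrt Cw * Real.sqrt (t - t') := by
    intro w hw Cw hCw t' t ht' ht htt
    have hsub : Ioc t' t ⊆ Icc (0:ℝ) 1 := fun s hs =>
      ⟨le_trans ht'.1 hs.1.le, le_trans hs.2 ht.2⟩
    set ν := volume.restrict (Ioc t' t) with hνdef
    haveI : IsFiniteMeasure ν := by
      refine ⟨?_⟩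
      rw [hνdef, Measure.restrict_apply_univ]
      simp [Real.volume_Ioc]
    have hle : ν ≤ μ := Measure.restrict_mono hsub le_rfl
    have hwn : MemLp (fun s => ‖w s‖) 2 ν := (hw.mono_measure hle).norm
    have hone : MemLp (fun _ : ℝ => (1:ℝ)) 2 ν := memLp_const 1
    have hcs := cs2 _ _ hwn hone
    simp only [mul_one, one_pow] at hcs
    have hν1 : ∫ _, (1:ℝ) ∂ν = t - t' := by
      rw [integral_const, smul_eq_mul, mul_one, measureReal_def, hνdef, Measure.restrict_apply_univ,
        Real.volume_Ioc, ENNReal.toReal_ofReal (by linarith)]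
    have hsqint : Integrable (fun s => ‖w s‖ ^ 2) μ := memL2_sq_integrable hw
    have hsq : ∫ s, ‖w s‖ ^ 2 ∂ν ≤ Cw := by
      refine le_trans ?_ hCw
      exact setIntegral_mono_set hsqint
        (Eventually.of_forall fun s => sq_nonneg _) (HasSubset.Subset.eventuallyLE hsub)
    have hn2 : ∀ s : ℝ, ‖w s‖ ^ 2 = ‖‖w s‖‖ ^ 2 := fun s => by rw [norm_norm]
    calc ∫ s in t'..t, ‖w s‖ = ∫ s, ‖w s‖ ∂ν := by
          rw [intervalIntegral.integral_of_le htt, hνdef]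
      _ ≤ Real.sqrt (∫ s, ‖w s‖ ^ 2 ∂ν) * Real.sqrt (t - t') := by
          rw [hν1] at hcs; exact hcs
      _ ≤ Real.sqrt Cw * Real.sqrt (t - t') :=
          mul_le_mul_of_nonneg_right (Real.sqrt_le_sqrt hsq) (Real.sqrt_nonneg _)
  -- pointwise bound on Q
  have hQbound : ∀ (w : ℝ → EuclideanSpace ℝ (Fin k)) (s : ℝ),
      ‖Q w s‖ ≤ M * Real.sqrt k * ‖w s‖ := by
    intro w s
    calc ‖Q w s‖ ≤ ∑ i, ‖w s i • F i (Xinf s) θ‖ := norm_sum_le _ _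
      _ = ∑ i, |w s i| * ‖F i (Xinf s) θ‖ := by
          refine Finset.sum_congr rfl fun i _ => ?_
          rw [norm_smul, Real.norm_eq_abs]
      _ ≤ ∑ i, |w s i| * M :=
          Finset.sum_le_sum fun i _ => mul_le_mul_of_nonneg_left (hM i s) (abs_nonneg _)
      _ = (∑ i, |w s i|) * M := by rw [← Finset.sum_mul]
      _ ≤ (Real.sqrt k * ‖w s‖) * M := mul_le_mul_of_nonneg_right (sum_abs_le _) hMnn
      _ = M * Real.sqrt k * ‖w s‖ := by ring
  -- equicontinuity bound
  have hnormQ : ∀ (w : ℝ → EuclideanSpace ℝ (Fin k)), MemLp w 2 μ → ∀ Cw : ℝ,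
      (∫ s, ‖w s‖ ^ 2 ∂μ) ≤ Cw → ∀ t' t : ℝ, t' ∈ Icc (0:ℝ) 1 → t ∈ Icc (0:ℝ) 1 → t' ≤ t →
      ‖∫ s in t'..t, Q w s‖ ≤ M * Real.sqrt k * (Real.sqrt Cw * Real.sqrt (t - t')) := by
    intro w hw Cw hCw t' t ht' ht htt
    have hnw : Integrable (fun s => ‖w s‖) μ := (hw.integrable one_le_two).norm
    have hbint : IntervalIntegrable (fun s => M * Real.sqrt k * ‖w s‖) volume t' t :=
      hIIr _ (hnw.const_mul _) t' t ht' ht htt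
    have h1 : ‖∫ s in t'..t, Q w s‖ ≤ |∫ s in t'..t, M * Real.sqrt k * ‖w s‖| :=
      intervalIntegral.norm_integral_le_abs_of_norm_le
        (Eventually.of_forall fun s => hQbound w s) hbint
    have h2 : ∫ s in t'..t, M * Real.sqrt k * ‖w s‖
        = M * Real.sqrt k * ∫ s in t'..t, ‖w s‖ := intervalIntegral.integral_const_mul _ _
    have h3 : (0:ℝ) ≤ ∫ s in t'..t, M * Real.sqrt k * ‖w s‖ := by
      refine intervalIntegral.integral_nonneg htt fun s _ => by positivity
    rw [abs_of_nonneg h3, h2] at h1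
    refine h1.trans ?_
    exact mul_le_mul_of_nonneg_left (hL1 w hw Cw hCw t' t ht' ht htt) (by positivity)
  have hGdiff : ∀ m, ∀ t' t : ℝ, t' ∈ Icc (0:ℝ) 1 → t ∈ Icc (0:ℝ) 1 → t' ≤ t →
      ‖G m t - G m t'‖ ≤ M * Real.sqrt k * (Real.sqrt C + Real.sqrt Cinf) * Real.sqrt (t - t') := by
    intro m t' t ht' ht htt
    have h01 : (0:ℝ) ∈ Icc (0:ℝ) 1 := ⟨le_rfl, one_pos.le⟩
    have hIQm0 : IntervalIntegrable (Q (u m)) volume 0 t' :=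
      hII _ (hQint _ (hu m)) 0 t' h01 ht' ht'.1
    have hIQmt : IntervalIntegrable (Q (u m)) volume 0 t :=
      hII _ (hQint _ (hu m)) 0 t h01 ht ht.1
    have hIQi0 : IntervalIntegrable (Q uinf) volume 0 t' :=
      hII _ (hQint _ huinf) 0 t' h01 ht' ht'.1
    have hIQit : IntervalIntegrable (Q uinf) volume 0 t :=
      hII _ (hQint _ huinf) 0 t h01 ht ht.1
    have e : G m t - G m t' = (∫ s in t'..t, Q (u m) s) - (∫ s in t'..t, Q uinf s) := by
      simp only [hGdef]
      rw [← intervalIntegral.integral_interval_sub_left hIQmt hIQm0,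
        ← intervalIntegral.integral_interval_sub_left hIQit hIQi0]
      abel
    rw [e]
    have hbm := hnormQ (u m) (hu m) C (hCb m) t' t ht' ht htt
    have hbi := hnormQ uinf huinf Cinf (le_of_eq rfl) t' t ht' ht htt
    calc ‖(∫ s in t'..t, Q (u m) s) - (∫ s in t'..t, Q uinf s)‖
        ≤ ‖∫ s in t'..t, Q (u m) s‖ + ‖∫ s in t'..t, Q uinf s‖ := norm_sub_le _ _
      _ ≤ M * Real.sqrt k * (Real.sqrt C * Real.sqrt (t - t'))
          + M * Real.sqrt k * (Real.sqrt Cinf * Real.sqrt (t - t')) := add_le_add hbm hbi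
      _ = M * Real.sqrt k * (Real.sqrt C + Real.sqrt Cinf) * Real.sqrt (t - t') := by ring
  have hec : ∀ ε > (0:ℝ), ∃ δ > (0:ℝ), ∀ m, ∀ t ∈ Icc (0:ℝ) 1, ∀ t'' ∈ Icc (0:ℝ) 1,
      |t - t''| ≤ δ → ‖G m t - G m t''‖ ≤ ε := by
    intro ε hε
    set Ceq := M * Real.sqrt k * (Real.sqrt C + Real.sqrt Cinf) with hCeqdef
    have hCeq0 : 0 ≤ Ceq := by positivity
    refine ⟨(ε / (Ceq + 1)) ^ 2, by positivity, ?_⟩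
    intro m t ht t'' ht'' hd
    have key : ∀ a ∈ Icc (0:ℝ) 1, ∀ b ∈ Icc (0:ℝ) 1, a ≤ b → b - a ≤ (ε / (Ceq + 1)) ^ 2 →
        ‖G m b - G m a‖ ≤ ε := by
      intro a ha b hb hab hba
      have h2 : Real.sqrt (b - a) ≤ ε / (Ceq + 1) := by
        calc Real.sqrt (b - a) ≤ Real.sqrt ((ε / (Ceq + 1)) ^ 2) := Real.sqrt_le_sqrt hba
          _ = ε / (Ceq + 1) := Real.sqrt_sq (by positivity)
      calc ‖G m b - G m a‖ ≤ Ceq * Real.sqrt (b - a) := hGdiff m a b ha hb hab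
        _ ≤ Ceq * (ε / (Ceq + 1)) := mul_le_mul_of_nonneg_left h2 hCeq0
        _ ≤ ε := by
            rw [mul_div_assoc', div_le_iff₀ (by linarith)]
            nlinarith
    rcases le_total t'' t with h | h
    · refine key t'' ht'' t ht h ?_
      calc t - t'' ≤ |t - t''| := le_abs_self _
        _ ≤ (ε / (Ceq + 1)) ^ 2 := hd
    · rw [norm_sub_rev]
      refine key t ht t'' ht'' h ?_
      calc t'' - t ≤ |t'' - t| := le_abs_self _
        _ = |t - t''| := abs_sub_comm _ _
        _ ≤ (ε / (Ceq + 1)) ^ 2 := hd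
  -- pointwise convergence of G
  have hpt : ∀ t ∈ Icc (0:ℝ) 1, Tendsto (fun m => G m t) atTop (𝓝 0) := by
    intro t ht
    set b := EuclideanSpace.basisFun (Fin n) ℝ with hbdef
    have hcoef : ∀ w : EuclideanSpace ℝ (Fin n),
        Tendsto (fun m => (inner ℝ w (G m t) : ℝ)) atTop (𝓝 0) := by
      intro w
      set g : ℝ → EuclideanSpace ℝ (Fin k) := fun s =>
        (EuclideanSpace.equiv (Fin k) ℝ).symm
          (fun i => (inner ℝ w (F i (Xinf s) θ) : ℝ)) with hgdef
      have hgc : Continuous g := by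
        refine (EuclideanSpace.equiv (Fin k) ℝ).symm.continuous.comp ?_
        exact continuous_pi fun i =>
          Continuous.inner continuous_const ((hFic i).comp hXinfc)
      have hgcoord : ∀ s (i : Fin k), g s i = (inner ℝ w (F i (Xinf s) θ) : ℝ) := fun s i => rfl
      obtain ⟨Cg, hCg⟩ :=
        (isCompact_Icc (a := (0:ℝ)) (b := 1)).exists_bound_of_continuousOn hgc.continuousOn
      set v : ℝ → EuclideanSpace ℝ (Fin k) := fun s => (Icc (0:ℝ) t).indicator g s with hvdef
      have hvmem : MemLp v 2 μ := by
        refine MemLp.of_bound ((hgc.aestronglyMeasurable).indicator measurableSet_Icc)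
          (max Cg 0) ?_
        filter_upwards [ae_restrict_mem measurableSet_Icc] with s hs
        by_cases hsm : s ∈ Icc (0:ℝ) t
        · simp only [hvdef, indicator_of_mem hsm]
          exact (hCg s hs).trans (le_max_left _ _)
        · simp only [hvdef, indicator_of_notMem hsm, norm_zero]
          exact le_max_right _ _
      have hinner : ∀ (wf : ℝ → EuclideanSpace ℝ (Fin k)) (s : ℝ),
          (inner ℝ (v s) (wf s) : ℝ)
            = (Icc (0:ℝ) t).indicator (fun s' => (inner ℝ w (Q wf s') : ℝ)) s := by
        intro wf s
        by_cases hsm : s ∈ Icc (0:ℝ) t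
        · simp only [hvdef, indicator_of_mem hsm]
          rw [PiLp.inner_apply]
          simp only [hQdef]
          rw [inner_sum]
          refine Finset.sum_congr rfl fun i _ => ?_
          rw [real_inner_smul_right]
          simp only [RCLike.inner_apply, starRingEnd_apply, star_trivial]
          rw [hgcoord s i]
        · simp only [hvdef, indicator_of_notMem hsm, inner_zero_left]
      have hsub' : Icc (0:ℝ) t ⊆ Icc (0:ℝ) 1 := Icc_subset_Icc le_rfl ht.2
      have hIoc : ∀ (wf : ℝ → EuclideanSpace ℝ (Fin k)), MemLp wf 2 μ →
          Integrable (Q wf) (volume.restrict (Ioc 0 t)) := by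
        intro wf hwf
        refine (hQint wf hwf).mono_measure (Measure.restrict_mono ?_ le_rfl)
        exact fun s hs => ⟨hs.1.le, hs.2.trans ht.2⟩
      have hrw : ∀ (wf : ℝ → EuclideanSpace ℝ (Fin k)), MemLp wf 2 μ →
          (∫ s in Icc (0:ℝ) 1, (inner ℝ (v s) (wf s) : ℝ))
            = (inner ℝ w (∫ s in (0:ℝ)..t, Q wf s) : ℝ) := by
        intro wf hwf
        have step1 : (∫ s in Icc (0:ℝ) 1, (inner ℝ (v s) (wf s) : ℝ))
            = ∫ s, (Icc (0:ℝ) t).indicator (fun s' => (inner ℝ w (Q wf s') : ℝ)) s ∂μ :=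
          integral_congr_ae (Eventually.of_forall fun s => hinner wf s)
        have step2 : μ.restrict (Icc (0:ℝ) t) = volume.restrict (Icc (0:ℝ) t) := by
          rw [hμdef, Measure.restrict_restrict measurableSet_Icc,
            inter_eq_self_of_subset_left hsub']
        rw [step1, integral_indicator measurableSet_Icc, step2,
          integral_Icc_eq_integral_Ioc, integral_inner (hIoc wf hwf) w,
          intervalIntegral.integral_of_le ht.1]
      have hw2 := hweak v hvmem
      have h1 : (fun m => ∫ s in Icc (0:ℝ) 1, (inner ℝ (v s) (u m s) : ℝ))
          = fun m => (inner ℝ w (∫ s in (0:ℝ)..t, Q (u m) s) : ℝ) :=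
        funext fun m => hrw (u m) (hu m)
      rw [h1, hrw uinf huinf] at hw2
      have h2 := hw2.sub
        (tendsto_const_nhds (x := (inner ℝ w (∫ s in (0:ℝ)..t, Q uinf s) : ℝ)))
      rw [sub_self] at h2
      have h3 : (fun m => (inner ℝ w (G m t) : ℝ))
          = fun m => (inner ℝ w (∫ s in (0:ℝ)..t, Q (u m) s) : ℝ)
            - (inner ℝ w (∫ s in (0:ℝ)..t, Q uinf s) : ℝ) := by
        funext m
        simp only [hGdef]
        rw [inner_sub_right]
      rw [h3]
      exact h2
    have hlim : Tendsto (fun m => ∑ j, (inner ℝ (b j) (G m t) : ℝ) • b j) atTop (𝓝 0) := by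
      have h5 : Tendsto (fun m => ∑ j, (inner ℝ (b j) (G m t) : ℝ) • b j) atTop
          (𝓝 (∑ j : Fin n, (0:ℝ) • b j)) :=
        tendsto_finset_sum _ fun j _ => (hcoef (b j)).smul_const (b j)
      simpa using h5
    have h4 : (fun m => G m t) = fun m => ∑ j, (inner ℝ (b j) (G m t) : ℝ) • b j :=
      funext fun m => (OrthonormalBasis.sum_repr' b (G m t)).symm
    rw [h4]
    exact hlim
  -- Grönwall constant
  set B := Real.sqrt (2 * L' ^ 2 * (1 + (k:ℝ) * C)) with hBdef
  have hB0 : 0 ≤ B := Real.sqrt_nonneg _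
  have hBsq : B ^ 2 = 2 * L' ^ 2 * (1 + (k:ℝ) * C) := Real.sq_sqrt (by positivity)
  -- Grönwall step
  have hgron : ∀ m (η : ℝ), 0 ≤ η → (∀ t ∈ Icc (0:ℝ) 1, ‖G m t‖ ≤ η) →
      ∀ t ∈ Icc (0:ℝ) 1,
        ‖x m t - xinf t‖ ≤ η * (1 + B * Real.sqrt 2 * Real.exp (B ^ 2)) := by
    intro m η hη hGη
    set ψ : ℝ → ℝ := fun s => ‖X m s - Xinf s‖ with hψdef
    have hψc : Continuous ψ := ((hXc m).sub hXinfc).norm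
    have hψ0 : ∀ s, 0 ≤ ψ s := fun s => norm_nonneg _
    obtain ⟨Cψ, hCψ⟩ :=
      (isCompact_Icc (a := (0:ℝ)) (b := 1)).exists_bound_of_continuousOn hψc.continuousOn
    have hψr : ∀ s : ℝ, ψ (r s) = ψ s := by
      intro s
      simp only [hψdef, hXdef, hXinfdef]
      rw [hrid (r s) (hrmem s)]
    have hψbd : ∀ s : ℝ, ‖ψ s‖ ≤ Cψ := by
      intro s
      rw [← hψr s]
      exact hCψ (r s) (hrmem s)
    have hψm : MemLp ψ 2 μ :=
      MemLp.of_bound hψc.aestronglyMeasurable Cψ (Eventually.of_forall hψbd)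
    set φ : ℝ → ℝ := fun s => L' * (1 + ∑ i, |u m s i|) with hφdef
    have hφ0 : ∀ s, 0 ≤ φ s := fun s =>
      mul_nonneg hL' (by positivity)
    have hφm : MemLp φ 2 μ := by
      have hsum : MemLp (fun s => ∑ i, |u m s i|) 2 μ := by
        have h0 : ∀ i : Fin k, MemLp (fun s => |u m s i|) 2 μ := by
          intro i
          have := (coord_memℒp (hu m) i).norm
          simpa [Real.norm_eq_abs] using this
        have := memLp_finset_sum (Finset.univ : Finset (Fin k))
          (f := fun i s => |u m s i|) (fun i _ => h0 i)
        simpa using this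
      exact ((memLp_const (1:ℝ)).add hsum).const_mul L'
    have hφint : Integrable (fun s => φ s ^ 2) μ := by
      have h1 := memL2_sq_integrable hφm
      refine h1.congr (Eventually.of_forall fun s => ?_)
      simp only [Real.norm_eq_abs, sq_abs]
    have hφsq : ∫ s, φ s ^ 2 ∂μ ≤ B ^ 2 := by
      have hptw : ∀ s, φ s ^ 2 ≤ 2 * L' ^ 2 + 2 * L' ^ 2 * (k:ℝ) * ‖u m s‖ ^ 2 := by
        intro s
        have hS := sum_abs_le (u m s)
        have hS0 : (0:ℝ) ≤ ∑ i, |u m s i| := Finset.sum_nonneg fun i _ => abs_nonneg _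
        have h1 : (∑ i, |u m s i|) ^ 2 ≤ (k:ℝ) * ‖u m s‖ ^ 2 := by
          have hk : Real.sqrt (k:ℝ) ^ 2 = (k:ℝ) := Real.sq_sqrt (by positivity)
          have hmul := mul_le_mul hS hS hS0
            (mul_nonneg (Real.sqrt_nonneg _) (norm_nonneg _))
          nlinarith [hmul, hk]
        have h2 : (1 + ∑ i, |u m s i|) ^ 2 ≤ 2 + 2 * (∑ i, |u m s i|) ^ 2 := by
          nlinarith [sq_nonneg (1 - ∑ i, |u m s i|)]
        calc φ s ^ 2 = L' ^ 2 * (1 + ∑ i, |u m s i|) ^ 2 := by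
              simp only [hφdef]; ring
          _ ≤ L' ^ 2 * (2 + 2 * ((k:ℝ) * ‖u m s‖ ^ 2)) := by
              have h3 : (1 + ∑ i, |u m s i|) ^ 2 ≤ 2 + 2 * ((k:ℝ) * ‖u m s‖ ^ 2) := by
                linarith
              exact mul_le_mul_of_nonneg_left h3 (sq_nonneg L')
          _ = 2 * L' ^ 2 + 2 * L' ^ 2 * (k:ℝ) * ‖u m s‖ ^ 2 := by ring
      have hint1 : Integrable (fun s => 2 * L' ^ 2 + 2 * L' ^ 2 * (k:ℝ) * ‖u m s‖ ^ 2) μ :=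
        (integrable_const _).add ((memL2_sq_integrable (hu m)).const_mul _)
      calc ∫ s, φ s ^ 2 ∂μ
          ≤ ∫ s, (2 * L' ^ 2 + 2 * L' ^ 2 * (k:ℝ) * ‖u m s‖ ^ 2) ∂μ :=
            integral_mono hφint hint1 hptw
        _ = 2 * L' ^ 2 * (μ univ).toReal + 2 * L' ^ 2 * (k:ℝ) * ∫ s, ‖u m s‖ ^ 2 ∂μ := by
            rw [integral_add (integrable_const _) ((memL2_sq_integrable (hu m)).const_mul _),
              integral_const, smul_eq_mul, measureReal_def]
            have h10 : ∫ (a : ℝ), 2 * L' ^ 2 * (k:ℝ) * ‖u m a‖ ^ 2 ∂μ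
                = 2 * L' ^ 2 * (k:ℝ) * ∫ (a : ℝ), ‖u m a‖ ^ 2 ∂μ := integral_const_mul _ _
            rw [h10]
            ring
        _ ≤ 2 * L' ^ 2 * 1 + 2 * L' ^ 2 * (k:ℝ) * C := by
            have hμuniv : (μ univ).toReal = 1 := by
              rw [hμdef, Measure.restrict_apply_univ, Real.volume_Icc]
              norm_num
            rw [hμuniv]
            have := hCb m
            have h5 : (0:ℝ) ≤ 2 * L' ^ 2 * (k:ℝ) := by positivity
            nlinarith
        _ = B ^ 2 := by rw [hBsq]; ring
    have hstep : ∀ t ∈ Icc (0:ℝ) 1,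
        ψ t ≤ η + B * Real.sqrt (∫ s in (0:ℝ)..t, ψ s ^ 2) := by
      intro t ht
      have hDnorm : ∀ s : ℝ, ‖D m s‖ ≤ φ s * ψ s := by
        intro s
        simp only [hDdef, hφdef, hψdef]
        calc ‖(F0 (X m s) θ - F0 (Xinf s) θ)
              + ∑ i, u m s i • (F i (X m s) θ - F i (Xinf s) θ)‖
            ≤ ‖F0 (X m s) θ - F0 (Xinf s) θ‖
              + ‖∑ i, u m s i • (F i (X m s) θ - F i (Xinf s) θ)‖ := norm_add_le _ _
          _ ≤ L' * ‖X m s - Xinf s‖ + ∑ i, |u m s i| * (L' * ‖X m s - Xinf s‖) := by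
              refine add_le_add (hF0' _ _) ?_
              refine (norm_sum_le _ _).trans (Finset.sum_le_sum fun i _ => ?_)
              rw [norm_smul, Real.norm_eq_abs]
              exact mul_le_mul_of_nonneg_left (hFi' i _ _) (abs_nonneg _)
          _ = L' * (1 + ∑ i, |u m s i|) * ‖X m s - Xinf s‖ := by
              rw [← Finset.sum_mul]; ring
      have hφψint : Integrable (fun s => φ s * ψ s) μ := by
        have hφ1 : Integrable φ μ := hφm.integrable one_le_two
        refine Integrable.mono' ((hφ1.abs).const_mul Cψ)
          (hφm.aestronglyMeasurable.mul hψc.aestronglyMeasurable) ?_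
        refine Eventually.of_forall fun s => ?_
        rw [Real.norm_eq_abs, abs_mul]
        have h6 : |ψ s| ≤ Cψ := by
          have := hψbd s
          rwa [Real.norm_eq_abs] at this
        calc |φ s| * |ψ s| ≤ |φ s| * Cψ :=
              mul_le_mul_of_nonneg_left h6 (abs_nonneg _)
          _ = Cψ * |φ s| := mul_comm _ _
      have hb : IntervalIntegrable (fun s => φ s * ψ s) volume 0 t :=
        hIIr _ hφψint 0 t ⟨le_rfl, one_pos.le⟩ ht ht.1
      have hnormint : ‖∫ s in (0:ℝ)..t, D m s‖ ≤ ∫ s in (0:ℝ)..t, φ s * ψ s := by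
        refine le_trans (intervalIntegral.norm_integral_le_abs_of_norm_le
          (Eventually.of_forall fun s => hDnorm s) hb) ?_
        rw [abs_of_nonneg
          (intervalIntegral.integral_nonneg ht.1 fun s _ => mul_nonneg (hφ0 s) (hψ0 s))]
      have hcs : ∫ s in (0:ℝ)..t, φ s * ψ s
          ≤ B * Real.sqrt (∫ s in (0:ℝ)..t, ψ s ^ 2) := by
        have hsub : Ioc (0:ℝ) t ⊆ Icc (0:ℝ) 1 := fun s hs => ⟨hs.1.le, hs.2.trans ht.2⟩
        have hle : volume.restrict (Ioc (0:ℝ) t) ≤ μ :=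
          Measure.restrict_mono hsub le_rfl
        have h1 := cs2 φ ψ (hφm.mono_measure hle) (hψm.mono_measure hle)
        have h2 : ∫ s, φ s ^ 2 ∂(volume.restrict (Ioc (0:ℝ) t)) ≤ B ^ 2 := by
          refine le_trans ?_ hφsq
          exact setIntegral_mono_set hφint
            (Eventually.of_forall fun s => sq_nonneg _) (HasSubset.Subset.eventuallyLE hsub)
        have h3 : Real.sqrt (∫ s, φ s ^ 2 ∂(volume.restrict (Ioc (0:ℝ) t))) ≤ B := by
          rw [← Real.sqrt_sq hB0]
          exact Real.sqrt_le_sqrt h2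
        calc ∫ s in (0:ℝ)..t, φ s * ψ s
            = ∫ s, φ s * ψ s ∂(volume.restrict (Ioc (0:ℝ) t)) :=
              intervalIntegral.integral_of_le ht.1
          _ ≤ Real.sqrt (∫ s, φ s ^ 2 ∂(volume.restrict (Ioc (0:ℝ) t)))
              * Real.sqrt (∫ s, ψ s ^ 2 ∂(volume.restrict (Ioc (0:ℝ) t))) := h1
          _ ≤ B * Real.sqrt (∫ s, ψ s ^ 2 ∂(volume.restrict (Ioc (0:ℝ) t))) :=
              mul_le_mul_of_nonneg_right h3 (Real.sqrt_nonneg _)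
          _ = B * Real.sqrt (∫ s in (0:ℝ)..t, ψ s ^ 2) := by
              rw [intervalIntegral.integral_of_le ht.1]
      calc ψ t = ‖x m t - xinf t‖ := by
            simp only [hψdef]
            rw [hXeq m t ht, hXinfeq t ht]
        _ = ‖(∫ s in (0:ℝ)..t, D m s) + G m t‖ := by rw [hsplit m t ht]
        _ ≤ ‖∫ s in (0:ℝ)..t, D m s‖ + ‖G m t‖ := norm_add_le _ _
        _ ≤ (∫ s in (0:ℝ)..t, φ s * ψ s) + η := add_le_add hnormint (hGη t ht)
        _ ≤ B * Real.sqrt (∫ s in (0:ℝ)..t, ψ s ^ 2) + η := by linarith [hcs]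
        _ = η + B * Real.sqrt (∫ s in (0:ℝ)..t, ψ s ^ 2) := by ring
    have hg := gronwall_aux hψc hψ0 hη hB0 hstep
    intro t ht
    have h7 := hg t ht
    have h8 : ψ t = ‖x m t - xinf t‖ := by
      simp only [hψdef]
      rw [hXeq m t ht, hXinfeq t ht]
    rwa [h8] at h7
  -- conclusion
  have hunif := unif_of_equicont hpt hec
  rw [Metric.tendstoUniformlyOn_iff]
  intro ε hε
  set κ := 1 + B * Real.sqrt 2 * Real.exp (B ^ 2) with hκdef
  have hκ0 : (0:ℝ) < κ := by positivity
  have hη : (0:ℝ) < ε / (2 * κ) := by positivity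
  filter_upwards [hunif (ε / (2 * κ)) hη] with m hm t ht
  have h9 := hgron m (ε / (2 * κ)) hη.le hm t ht
  rw [dist_eq_norm, norm_sub_rev]
  calc ‖x m t - xinf t‖ ≤ ε / (2 * κ) * κ := h9
    _ = ε / 2 := by field_simp
    _ < ε := by linarith
end
end

section
/- Let (u_m) ⊂ L²([0,1],ℝ^k) with u_m ⇀ u_∞ weakly in L². For each m ∈ ℕ ∪ {∞}, let X_m : [0,1] × Θ → ℝⁿ be the map X_m(t,θ) = x_{u_m}^θ(t) collecting the ensemble trajectories. Then sup_{(t,θ)∈[0,1]×Θ} |X_m(t,θ) − X_∞(t,θ)|₂ → 0 as m → ∞, i.e., the ensemble flow maps converge uniformly on [0,1] × Θ. -/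
open MeasureTheory Set Filter Topology

noncomputable section

variable {n d k : ℕ}

namespace EnsembleAux


lemma coord_le_norm {k : ℕ} (x : EuclideanSpace ℝ (Fin k)) (i : Fin k) : |x i| ≤ ‖x‖ := by
  rw [EuclideanSpace.norm_eq]
  have h1 : |x i| = Real.sqrt (‖x i‖ ^ 2) := by
    rw [Real.sqrt_sq_eq_abs, Real.norm_eq_abs, abs_abs]
  rw [h1]
  apply Real.sqrt_le_sqrt
  exact Finset.single_le_sum (f := fun j => ‖x j‖ ^ 2) (fun j _ => by positivity)
    (Finset.mem_univ i)

def gronConst : ℕ → ℝ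
  | 0 => 1
  | (j+1) => 2 + j * gronConst j

lemma one_le_gronConst : ∀ j, 1 ≤ gronConst j := by
  intro j
  induction j with
  | zero => simp [gronConst]
  | succ j ih =>
    simp only [gronConst]
    have : (0:ℝ) ≤ (j:ℝ) := Nat.cast_nonneg j
    nlinarith

lemma gronConst_mono (j : ℕ) : gronConst j ≤ gronConst (j+1) := by
  cases j with
  | zero => norm_num [gronConst]
  | succ i =>
    have h1 := one_le_gronConst (i+1)
    simp only [gronConst] at h1 ⊢
    push_cast at h1 ⊢
    nlinarith [Nat.cast_nonneg (α := ℝ) i]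

lemma gron (c y : ℝ → ℝ) (hc : IntegrableOn c (Icc 0 1))
    (hc0 : ∀ s ∈ Icc (0:ℝ) 1, 0 ≤ c s)
    (hy : ContinuousOn y (Icc 0 1)) (A : ℝ) (hA : 0 ≤ A)
    (hineq : ∀ t ∈ Icc (0:ℝ) 1, y t ≤ A + ∫ s in (0:ℝ)..t, c s * y s)
    (N : ℕ) (hN : (∫ s in (0:ℝ)..1, c s) ≤ N / 2) :
    ∀ t ∈ Icc (0:ℝ) 1, y t ≤ A * gronConst N := by
  -- bound on y
  obtain ⟨My₀, hMy₀⟩ := isCompact_Icc.exists_bound_of_continuousOn hy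
  set My := max My₀ 0 with hMydef
  have hMyabs : ∀ s ∈ Icc (0:ℝ) 1, |y s| ≤ My := by
    intro s hs
    rw [← Real.norm_eq_abs]
    exact le_trans (hMy₀ s hs) (le_max_left _ _)
  have hMy : ∀ s ∈ Icc (0:ℝ) 1, y s ≤ My := fun s hs =>
    le_trans (le_abs_self _) (hMyabs s hs)
  have hMy0 : 0 ≤ My := le_max_right _ _
  -- integrability of c * y
  have hcy : IntegrableOn (fun s => c s * y s) (Icc 0 1) := by
    apply Integrable.mono' (hc.abs.mul_const My)
    · exact hc.aestronglyMeasurable.mul (hy.aestronglyMeasurable measurableSet_Icc)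
    · filter_upwards [ae_restrict_mem measurableSet_Icc] with s hs
      rw [Real.norm_eq_abs, abs_mul]
      exact mul_le_mul_of_nonneg_left (hMyabs s hs) (abs_nonneg _)
  have hsub : ∀ a b : ℝ, a ∈ Icc (0:ℝ) 1 → b ∈ Icc (0:ℝ) 1 → uIcc a b ⊆ Icc 0 1 :=
    fun a b ha hb => uIcc_subset_Icc ha hb
  have hIc : ∀ a b, a ∈ Icc (0:ℝ) 1 → b ∈ Icc (0:ℝ) 1 → IntervalIntegrable c volume a b :=
    fun a b ha hb => (hc.mono_set (hsub a b ha hb)).intervalIntegrable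
  have hIcy : ∀ a b, a ∈ Icc (0:ℝ) 1 → b ∈ Icc (0:ℝ) 1 →
      IntervalIntegrable (fun s => c s * y s) volume a b :=
    fun a b ha hb => (hcy.mono_set (hsub a b ha hb)).intervalIntegrable
  set w : ℝ → ℝ := fun t => ∫ s in (0:ℝ)..t, c s with hwdef
  have h01 : (0:ℝ) ∈ Icc (0:ℝ) 1 := ⟨le_refl _, zero_le_one⟩
  have h11 : (1:ℝ) ∈ Icc (0:ℝ) 1 := ⟨zero_le_one, le_refl _⟩
  have hwcont : ContinuousOn w (Icc 0 1) := by
    apply (intervalIntegral.continuousOn_primitive hc).congr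
    intro t ht
    rw [hwdef]
    exact intervalIntegral.integral_of_le ht.1
  have hwmono : ∀ a b, a ∈ Icc (0:ℝ) 1 → b ∈ Icc (0:ℝ) 1 → a ≤ b → w a ≤ w b := by
    intro a b ha hb hab
    have hdiff : w b - w a = ∫ s in a..b, c s :=
      intervalIntegral.integral_interval_sub_left (hIc 0 b h01 hb) (hIc 0 a h01 ha)
    have hpos : 0 ≤ ∫ s in a..b, c s := by
      apply intervalIntegral.integral_nonneg hab
      intro s hs
      exact hc0 s ⟨le_trans ha.1 hs.1, le_trans hs.2 hb.2⟩
    linarith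
  have claim : ∀ j : ℕ, ∀ t ∈ Icc (0:ℝ) 1, w t ≤ j / 2 → y t ≤ A * gronConst j := by
    intro j
    induction j with
    | zero =>
      intro t ht hwt
      norm_num at hwt
      have hmono := intervalIntegral.integral_mono_on ht.1 (hIcy 0 t h01 ht)
        ((hIc 0 t h01 ht).mul_const My)
        (fun s hs => mul_le_mul_of_nonneg_left
          (hMy s ⟨hs.1, le_trans hs.2 ht.2⟩)
          (hc0 s ⟨hs.1, le_trans hs.2 ht.2⟩))
      rw [intervalIntegral.integral_mul_const] at hmono
      have : w t * My ≤ 0 := mul_nonpos_of_nonpos_of_nonneg hwt hMy0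
      have := hineq t ht
      simp only [gronConst, mul_one]
      linarith
    | succ j IH =>
      intro t ht hwt
      by_cases hle : w t ≤ j / 2
      · calc y t ≤ A * gronConst j := IH t ht hle
          _ ≤ A * gronConst (j+1) := mul_le_mul_of_nonneg_left (gronConst_mono j) hA
      push_neg at hle
      have h0t : (0:ℝ) ≤ t := ht.1
      have hw0 : w 0 = 0 := intervalIntegral.integral_same
      have hmem : (j:ℝ)/2 ∈ Icc (w 0) (w t) := by
        rw [hw0]; exact ⟨by positivity, le_of_lt hle⟩
      obtain ⟨s', hs'mem, hws'⟩ :=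
        intermediate_value_Icc h0t (hwcont.mono (Icc_subset_Icc (le_refl _) ht.2)) hmem
      have hs'01 : s' ∈ Icc (0:ℝ) 1 := ⟨hs'mem.1, le_trans hs'mem.2 ht.2⟩
      obtain ⟨r0, hr0mem, hr0max'⟩ := isCompact_Icc.exists_isMaxOn
        (nonempty_Icc.2 hs'mem.2)
        (hy.mono (Icc_subset_Icc hs'mem.1 ht.2))
      have hr0max : ∀ r ∈ Icc s' t, y r ≤ y r0 := fun r hr => hr0max' hr
      have hr001 : r0 ∈ Icc (0:ℝ) 1 := ⟨le_trans hs'mem.1 hr0mem.1, le_trans hr0mem.2 ht.2⟩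
      set M := y r0 with hMdef
      have hytM : y t ≤ M := hr0max t ⟨hs'mem.2, le_refl _⟩
      rcases le_or_gt M 0 with hM0 | hM0
      · have : 0 ≤ A * gronConst (j+1) :=
          mul_nonneg hA (le_trans zero_le_one (one_le_gronConst _))
        linarith
      -- main estimate
      have hsplit : (∫ s in (0:ℝ)..r0, c s * y s)
          = (∫ s in (0:ℝ)..s', c s * y s) + ∫ s in s'..r0, c s * y s :=
        (intervalIntegral.integral_add_adjacent_intervals
          (hIcy 0 s' h01 hs'01) (hIcy s' r0 hs'01 hr001)).symm
      have hbound1 : (∫ s in (0:ℝ)..s', c s * y s) ≤ (j:ℝ)/2 * (A * gronConst j) := by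
        have := intervalIntegral.integral_mono_on hs'mem.1 (hIcy 0 s' h01 hs'01)
          ((hIc 0 s' h01 hs'01).mul_const (A * gronConst j)) ?_
        · rw [intervalIntegral.integral_mul_const] at this
          calc (∫ s in (0:ℝ)..s', c s * y s) ≤ w s' * (A * gronConst j) := this
            _ = (j:ℝ)/2 * (A * gronConst j) := by rw [hws']
        · intro s hs
          have hs01 : s ∈ Icc (0:ℝ) 1 := ⟨hs.1, le_trans hs.2 hs'01.2⟩
          have hys : y s ≤ A * gronConst j := by
            apply IH s hs01
            rw [← hws']
            exact hwmono s s' hs01 hs'01 hs.2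
          exact mul_le_mul_of_nonneg_left hys (hc0 s hs01)
      have hbound2 : (∫ s in s'..r0, c s * y s) ≤ (1/2) * M := by
        have hstep := intervalIntegral.integral_mono_on hr0mem.1 (hIcy s' r0 hs'01 hr001)
          ((hIc s' r0 hs'01 hr001).mul_const M) ?_
        · rw [intervalIntegral.integral_mul_const] at hstep
          have hwr0 : (∫ s in s'..r0, c s) = w r0 - w s' :=
            (intervalIntegral.integral_interval_sub_left (hIc 0 r0 h01 hr001)
              (hIc 0 s' h01 hs'01)).symm
          have hhalf : w r0 - w s' ≤ 1/2 := by
            have : w r0 ≤ w t := hwmono r0 t hr001 ht hr0mem.2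
            rw [hws'] at *
            push_cast at hwt ⊢
            linarith
          calc (∫ s in s'..r0, c s * y s) ≤ (∫ s in s'..r0, c s) * M := hstep
            _ = (w r0 - w s') * M := by rw [hwr0]
            _ ≤ (1/2) * M := mul_le_mul_of_nonneg_right hhalf (le_of_lt hM0)
        · intro s hs
          have hs01 : s ∈ Icc (0:ℝ) 1 := ⟨le_trans hs'mem.1 hs.1, le_trans hs.2 hr001.2⟩
          exact mul_le_mul_of_nonneg_left (hr0max s ⟨hs.1, le_trans hs.2 hr0mem.2⟩)
            (hc0 s hs01)
      have hM := hineq r0 hr001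
      rw [hsplit] at hM
      have hgc : gronConst (j+1) = 2 + j * gronConst j := rfl
      have : M ≤ A * gronConst (j+1) := by rw [hgc]; nlinarith
      linarith
  intro t ht
  exact claim N t ht (le_trans (hwmono t 1 ht h11 ht.2) hN)

lemma integrableOn_mul_of_continuousOn {c g : ℝ → ℝ} (hc : IntegrableOn c (Icc 0 1))
    (hg : ContinuousOn g (Icc 0 1)) : IntegrableOn (fun s => c s * g s) (Icc 0 1) := by
  obtain ⟨M, hM⟩ := isCompact_Icc.exists_bound_of_continuousOn hg
  apply Integrable.mono' (hc.abs.mul_const (max M 0))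
  · exact hc.aestronglyMeasurable.mul (hg.aestronglyMeasurable measurableSet_Icc)
  · filter_upwards [ae_restrict_mem measurableSet_Icc] with s hs
    rw [Real.norm_eq_abs, abs_mul]
    have h := hM s hs
    rw [Real.norm_eq_abs] at h
    exact mul_le_mul_of_nonneg_left (le_trans h (le_max_left _ _)) (abs_nonneg _)

lemma integrableOn_ctrl_smul {n k : ℕ} {p : ℝ → EuclideanSpace ℝ (Fin k)}
    (hp : MemLp p 2 (volume.restrict (Icc (0:ℝ) 1)))
    {b : ℝ → Fin k → EuclideanSpace ℝ (Fin n)}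
    (hb : ∀ i, ContinuousOn (fun s => b s i) (Icc 0 1)) :
    IntegrableOn (fun s => ∑ i, p s i • b s i) (Icc 0 1) := by
  have hp1 : Integrable p (volume.restrict (Icc (0:ℝ) 1)) :=
    memLp_one_iff_integrable.mp (hp.mono_exponent one_le_two)
  apply integrable_finset_sum
  intro i _
  obtain ⟨Bi, hBi⟩ := isCompact_Icc.exists_bound_of_continuousOn (hb i)
  apply Integrable.mono' (hp1.norm.mul_const (max Bi 0))
  · have hproj : Continuous (fun v : EuclideanSpace ℝ (Fin k) => v i) :=
      (EuclideanSpace.proj (𝕜 := ℝ) i).continuous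
    exact (hproj.comp_aestronglyMeasurable
      hp.aestronglyMeasurable).smul ((hb i).aestronglyMeasurable measurableSet_Icc)
  · filter_upwards [ae_restrict_mem measurableSet_Icc] with s hs
    rw [norm_smul, Real.norm_eq_abs]
    exact mul_le_mul (coord_le_norm _ i) (le_trans (hBi s hs) (le_max_left _ _))
      (norm_nonneg _) (norm_nonneg _)

lemma lip_continuous {n n' : ℕ} {L : ℝ}
    {G : EuclideanSpace ℝ (Fin n) → EuclideanSpace ℝ (Fin n')}
    (hG : ∀ x₁ x₂, ‖G x₁ - G x₂‖ ≤ L * ‖x₁ - x₂‖) : Continuous G := by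
  apply LipschitzWith.continuous (K := L.toNNReal)
  apply LipschitzWith.of_dist_le_mul
  intro x₁ x₂
  rw [dist_eq_norm, dist_eq_norm]
  calc ‖G x₁ - G x₂‖ ≤ L * ‖x₁ - x₂‖ := hG x₁ x₂
    _ ≤ L.toNNReal * ‖x₁ - x₂‖ :=
      mul_le_mul_of_nonneg_right (Real.le_coe_toNNReal L) (norm_nonneg _)

lemma traj_compare {n d k : ℕ}
    (Θ : Set (EuclideanSpace ℝ (Fin d)))
    (F0 : EuclideanSpace ℝ (Fin n) → EuclideanSpace ℝ (Fin d) → EuclideanSpace ℝ (Fin n))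
    (F : Fin k → EuclideanSpace ℝ (Fin n) → EuclideanSpace ℝ (Fin d) →
      EuclideanSpace ℝ (Fin n))
    (L : ℝ) (hL : 0 ≤ L)
    (hF0 : ∀ x₁ x₂ θ₁ θ₂, θ₁ ∈ Θ → θ₂ ∈ Θ →
      ‖F0 x₁ θ₁ - F0 x₂ θ₂‖ ≤ L * (‖x₁ - x₂‖ + ‖θ₁ - θ₂‖))
    (hF : ∀ i, ∀ x₁ x₂ θ₁ θ₂, θ₁ ∈ Θ → θ₂ ∈ Θ →
      ‖F i x₁ θ₁ - F i x₂ θ₂‖ ≤ L * (‖x₁ - x₂‖ + ‖θ₁ - θ₂‖))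
    (x0 : EuclideanSpace ℝ (Fin d) → EuclideanSpace ℝ (Fin n))
    {θ θ' : EuclideanSpace ℝ (Fin d)} (hθ : θ ∈ Θ) (hθ' : θ' ∈ Θ)
    {p q : ℝ → EuclideanSpace ℝ (Fin k)}
    (hp : MemLp p 2 (volume.restrict (Icc (0:ℝ) 1)))
    (hq : MemLp q 2 (volume.restrict (Icc (0:ℝ) 1)))
    {x y : ℝ → EuclideanSpace ℝ (Fin n)}
    (hx : IsTrajectory F0 F x0 p θ x) (hy : IsTrajectory F0 F x0 q θ' y)
    (N : ℕ) (hN : L * (1 + k * ∫ s in Icc (0:ℝ) 1, ‖p s‖) ≤ N / 2)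
    (A : ℝ)
    (hA : ∀ t ∈ Icc (0:ℝ) 1,
      ‖x0 θ - x0 θ'‖ + L * (1 + k * ∫ s in Icc (0:ℝ) 1, ‖p s‖) * ‖θ - θ'‖
        + ‖∫ s in (0:ℝ)..t, ∑ i, (p s i - q s i) • F i (y s) θ'‖ ≤ A) :
    ∀ t ∈ Icc (0:ℝ) 1, ‖x t - y t‖ ≤ A * gronConst N := by
  obtain ⟨hxc, hxeq⟩ := hx
  obtain ⟨hyc, hyeq⟩ := hy
  have h01 : (0:ℝ) ∈ Icc (0:ℝ) 1 := ⟨le_refl _, zero_le_one⟩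
  have h11 : (1:ℝ) ∈ Icc (0:ℝ) 1 := ⟨zero_le_one, le_refl _⟩
  have hp1 : Integrable p (volume.restrict (Icc (0:ℝ) 1)) :=
    memLp_one_iff_integrable.mp (hp.mono_exponent one_le_two)
  set Ip := ∫ s in Icc (0:ℝ) 1, ‖p s‖ with hIpdef
  have hIp0 : 0 ≤ Ip := setIntegral_nonneg measurableSet_Icc (fun s _ => norm_nonneg _)
  set c : ℝ → ℝ := fun s => L * (1 + k * ‖p s‖) with hcdef
  have hc : IntegrableOn c (Icc 0 1) :=
    ((integrable_const (1:ℝ)).add (hp1.norm.const_mul k)).const_mul L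
  have hc0 : ∀ s ∈ Icc (0:ℝ) 1, 0 ≤ c s := fun s _ => mul_nonneg hL (by positivity)
  have hA0 : 0 ≤ A := by
    refine le_trans ?_ (hA 0 h01)
    have h1 : 0 ≤ L * (1 + k * Ip) * ‖θ - θ'‖ :=
      mul_nonneg (mul_nonneg hL (by positivity)) (norm_nonneg _)
    positivity
  have hcint : (∫ s in (0:ℝ)..1, c s) = L * (1 + k * Ip) := by
    rw [intervalIntegral.integral_of_le zero_le_one, ← integral_Icc_eq_integral_Ioc,
      integral_const_mul, integral_add (integrable_const _) (hp1.norm.const_mul _),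
      integral_const_mul, setIntegral_const]
    simp [Real.volume_Icc, hIpdef]
  have hcF0 : ∀ θ'' ∈ Θ, ∀ {z : ℝ → EuclideanSpace ℝ (Fin n)}, ContinuousOn z (Icc 0 1) →
      ContinuousOn (fun s => F0 (z s) θ'') (Icc 0 1) := by
    intro θ'' hθ'' z hz
    exact (lip_continuous (G := fun v => F0 v θ'') (fun x₁ x₂ => by
      simpa using hF0 x₁ x₂ θ'' θ'' hθ'' hθ'')).comp_continuousOn hz
  have hcFi : ∀ (i : Fin k), ∀ θ'' ∈ Θ, ∀ {z : ℝ → EuclideanSpace ℝ (Fin n)},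
      ContinuousOn z (Icc 0 1) →
      ContinuousOn (fun s => F i (z s) θ'') (Icc 0 1) := by
    intro i θ'' hθ'' z hz
    exact (lip_continuous (G := fun v => F i v θ'') (fun x₁ x₂ => by
      simpa using hF i x₁ x₂ θ'' θ'' hθ'' hθ'')).comp_continuousOn hz
  set f : ℝ → EuclideanSpace ℝ (Fin n) :=
    fun s => F0 (x s) θ + ∑ i, p s i • F i (x s) θ with hfdef
  set g : ℝ → EuclideanSpace ℝ (Fin n) :=
    fun s => F0 (y s) θ' + ∑ i, q s i • F i (y s) θ' with hgdef
  set j1 : ℝ → EuclideanSpace ℝ (Fin n) :=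
    fun s => (F0 (x s) θ - F0 (y s) θ') + ∑ i, p s i • (F i (x s) θ - F i (y s) θ')
    with hj1def
  set j2 : ℝ → EuclideanSpace ℝ (Fin n) :=
    fun s => ∑ i, (p s i - q s i) • F i (y s) θ' with hj2def
  have hf_int : IntegrableOn f (Icc 0 1) :=
    ((hcF0 θ hθ hxc).integrableOn_Icc).add
      (integrableOn_ctrl_smul hp (fun i => hcFi i θ hθ hxc))
  have hg_int : IntegrableOn g (Icc 0 1) :=
    ((hcF0 θ' hθ' hyc).integrableOn_Icc).add
      (integrableOn_ctrl_smul hq (fun i => hcFi i θ' hθ' hyc))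
  have hj2_int : IntegrableOn j2 (Icc 0 1) :=
    integrableOn_ctrl_smul (hp.sub hq) (b := fun s i => F i (y s) θ')
      (fun i => hcFi i θ' hθ' hyc)
  have hsplit : ∀ s, f s - g s = j1 s + j2 s := by
    intro s
    simp only [hfdef, hgdef, hj1def, hj2def, smul_sub, sub_smul, Finset.sum_sub_distrib]
    abel
  have hj1_int : IntegrableOn j1 (Icc 0 1) := by
    have h : j1 = fun s => (f s - g s) - j2 s := by
      funext s; rw [hsplit s]; abel
    rw [h]; exact (hf_int.sub hg_int).sub hj2_int
  have hcy_int : IntegrableOn (fun s => c s * ‖x s - y s‖) (Icc 0 1) :=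
    integrableOn_mul_of_continuousOn hc ((hxc.sub hyc).norm)
  have hsubt : ∀ t ∈ Icc (0:ℝ) 1, uIcc 0 t ⊆ Icc 0 1 := fun t ht => uIcc_subset_Icc h01 ht
  have key : ∀ t ∈ Icc (0:ℝ) 1, ‖x t - y t‖ ≤ A + ∫ s in (0:ℝ)..t, c s * ‖x s - y s‖ := by
    intro t ht
    have hIf := (hf_int.mono_set (hsubt t ht)).intervalIntegrable
    have hIg := (hg_int.mono_set (hsubt t ht)).intervalIntegrable
    have hIj1 := (hj1_int.mono_set (hsubt t ht)).intervalIntegrable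
    have hIj2 := (hj2_int.mono_set (hsubt t ht)).intervalIntegrable
    have hIcy := (hcy_int.mono_set (hsubt t ht)).intervalIntegrable
    have hIct := (hc.mono_set (hsubt t ht)).intervalIntegrable
    have heq : x t - y t = (x0 θ - x0 θ') +
        ((∫ s in (0:ℝ)..t, j1 s) + ∫ s in (0:ℝ)..t, j2 s) := by
      rw [hxeq t ht, hyeq t ht, add_sub_add_comm,
        ← intervalIntegral.integral_add hIj1 hIj2,
        ← intervalIntegral.integral_sub hIf hIg]
      congr 1
      exact intervalIntegral.integral_congr (fun s _ => hsplit s)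
    have hptwise : ∀ s ∈ Icc (0:ℝ) t,
        ‖j1 s‖ ≤ c s * ‖x s - y s‖ + c s * ‖θ - θ'‖ := by
      intro s hs
      have h1 : ‖F0 (x s) θ - F0 (y s) θ'‖ ≤ L * (‖x s - y s‖ + ‖θ - θ'‖) :=
        hF0 _ _ _ _ hθ hθ'
      have h2 : ‖∑ i, p s i • (F i (x s) θ - F i (y s) θ')‖
          ≤ (k * ‖p s‖) * (L * (‖x s - y s‖ + ‖θ - θ'‖)) := by
        calc ‖∑ i, p s i • (F i (x s) θ - F i (y s) θ')‖
            ≤ ∑ i, ‖p s i • (F i (x s) θ - F i (y s) θ')‖ := norm_sum_le _ _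
          _ ≤ ∑ _i : Fin k, ‖p s‖ * (L * (‖x s - y s‖ + ‖θ - θ'‖)) := by
              apply Finset.sum_le_sum
              intro i _
              rw [norm_smul, Real.norm_eq_abs]
              exact mul_le_mul (coord_le_norm _ i) (hF i _ _ _ _ hθ hθ')
                (norm_nonneg _) (norm_nonneg _)
          _ = (k * ‖p s‖) * (L * (‖x s - y s‖ + ‖θ - θ'‖)) := by
              rw [Finset.sum_const, Finset.card_univ, Fintype.card_fin, nsmul_eq_mul]
              ring
      have h3 : ‖j1 s‖ ≤ ‖F0 (x s) θ - F0 (y s) θ'‖ +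
          ‖∑ i, p s i • (F i (x s) θ - F i (y s) θ')‖ := norm_add_le _ _
      have h4 : L * (‖x s - y s‖ + ‖θ - θ'‖) +
          (k * ‖p s‖) * (L * (‖x s - y s‖ + ‖θ - θ'‖))
          = c s * ‖x s - y s‖ + c s * ‖θ - θ'‖ := by
        simp only [hcdef]; ring
      linarith
    have hn1 : ‖∫ s in (0:ℝ)..t, j1 s‖ ≤ ∫ s in (0:ℝ)..t, ‖j1 s‖ :=
      intervalIntegral.norm_integral_le_integral_norm ht.1
    have hmono := intervalIntegral.integral_mono_on ht.1 hIj1.norm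
      (hIcy.add (hIct.mul_const (‖θ - θ'‖))) hptwise
    rw [intervalIntegral.integral_add hIcy (hIct.mul_const _),
      intervalIntegral.integral_mul_const] at hmono
    have hct1 : (∫ s in (0:ℝ)..t, c s) ≤ L * (1 + k * Ip) := by
      rw [← hcint]
      have hIct1 := (hc.mono_set (uIcc_subset_Icc ht h11)).intervalIntegrable
      have hadd := intervalIntegral.integral_add_adjacent_intervals hIct hIct1
      have hpos : 0 ≤ ∫ s in t..1, c s :=
        intervalIntegral.integral_nonneg ht.2
          (fun s hs => hc0 s ⟨le_trans ht.1 hs.1, hs.2⟩)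
      linarith
    have hAt := hA t ht
    calc ‖x t - y t‖ = ‖(x0 θ - x0 θ') +
          ((∫ s in (0:ℝ)..t, j1 s) + ∫ s in (0:ℝ)..t, j2 s)‖ := by rw [heq]
      _ ≤ ‖x0 θ - x0 θ'‖ + (‖∫ s in (0:ℝ)..t, j1 s‖ + ‖∫ s in (0:ℝ)..t, j2 s‖) :=
          le_trans (norm_add_le _ _) (by gcongr; exact norm_add_le _ _)
      _ ≤ ‖x0 θ - x0 θ'‖ + (((∫ s in (0:ℝ)..t, c s * ‖x s - y s‖)
            + (∫ s in (0:ℝ)..t, c s) * ‖θ - θ'‖) + ‖∫ s in (0:ℝ)..t, j2 s‖) := by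
          gcongr
          exact le_trans hn1 hmono
      _ ≤ ‖x0 θ - x0 θ'‖ + (((∫ s in (0:ℝ)..t, c s * ‖x s - y s‖)
            + (L * (1 + k * Ip)) * ‖θ - θ'‖) + ‖∫ s in (0:ℝ)..t, j2 s‖) := by
          gcongr
      _ ≤ A + ∫ s in (0:ℝ)..t, c s * ‖x s - y s‖ := by linarith
  exact gron c (fun s => ‖x s - y s‖) hc hc0 ((hxc.sub hyc).norm) A hA0 key N
    (by rw [hcint]; exact hN)

lemma sum_smul_bound {n k : ℕ} (v : EuclideanSpace ℝ (Fin k))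
    (b : Fin k → EuclideanSpace ℝ (Fin n)) {B : ℝ} (hB : ∀ i, ‖b i‖ ≤ B) :
    ‖∑ i, v i • b i‖ ≤ k * B * ‖v‖ := by
  calc ‖∑ i, v i • b i‖ ≤ ∑ i, ‖v i • b i‖ := norm_sum_le _ _
    _ ≤ ∑ _i : Fin k, ‖v‖ * B := by
        apply Finset.sum_le_sum
        intro i _
        rw [norm_smul, Real.norm_eq_abs]
        exact mul_le_mul (coord_le_norm _ i) (hB i) (norm_nonneg _) (norm_nonneg _)
    _ = k * B * ‖v‖ := by
        rw [Finset.sum_const, Finset.card_univ, Fintype.card_fin, nsmul_eq_mul]; ring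

lemma euclid_norm_le {k : ℕ} (x : EuclideanSpace ℝ (Fin k)) {C : ℝ} (hC : 0 ≤ C)
    (h : ∀ i, |x i| ≤ C) : ‖x‖ ≤ Real.sqrt k * C := by
  rw [EuclideanSpace.norm_eq]
  have h1 : ∑ i : Fin k, ‖x i‖ ^ 2 ≤ ∑ _i : Fin k, C^2 := by
    apply Finset.sum_le_sum
    intro i _
    rw [Real.norm_eq_abs]
    exact pow_le_pow_left₀ (abs_nonneg _) (h i) 2
  rw [Finset.sum_const, Finset.card_univ, Fintype.card_fin, nsmul_eq_mul] at h1
  calc Real.sqrt (∑ i : Fin k, ‖x i‖ ^ 2) ≤ Real.sqrt (k * C^2) := Real.sqrt_le_sqrt h1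
    _ = Real.sqrt k * C := by
        rw [Real.sqrt_mul (Nat.cast_nonneg k), Real.sqrt_sq hC]

end EnsembleAux

open EnsembleAux

set_option maxHeartbeats 2000000 in
/-- uniform convergence of the ensemble flow maps: if `u_m ⇀ u_∞` weakly
in `L²` then `X_m(t,θ) = x_{u_m}^θ(t)` converges to `X_∞` uniformly on `[0,1] × Θ`. -/
theorem ensemble_flow_weak_to_C0 (n d k : ℕ)
    (Θ : Set (EuclideanSpace ℝ (Fin d))) (hΘ : IsCompact Θ)
    (F0 : EuclideanSpace ℝ (Fin n) → EuclideanSpace ℝ (Fin d) → EuclideanSpace ℝ (Fin n))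
    (F : Fin k → EuclideanSpace ℝ (Fin n) → EuclideanSpace ℝ (Fin d) →
      EuclideanSpace ℝ (Fin n))
    (L : ℝ)
    (hF0 : ∀ x₁ x₂ θ₁ θ₂, θ₁ ∈ Θ → θ₂ ∈ Θ →
      ‖F0 x₁ θ₁ - F0 x₂ θ₂‖ ≤ L * (‖x₁ - x₂‖ + ‖θ₁ - θ₂‖))
    (hF : ∀ i, ∀ x₁ x₂ θ₁ θ₂, θ₁ ∈ Θ → θ₂ ∈ Θ →
      ‖F i x₁ θ₁ - F i x₂ θ₂‖ ≤ L * (‖x₁ - x₂‖ + ‖θ₁ - θ₂‖))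
    (x0 : EuclideanSpace ℝ (Fin d) → EuclideanSpace ℝ (Fin n))
    (hx0 : ContinuousOn x0 Θ)
    (u : ℕ → ℝ → EuclideanSpace ℝ (Fin k)) (uinf : ℝ → EuclideanSpace ℝ (Fin k))
    (hu : ∀ m, MemLp (u m) 2 (volume.restrict (Icc (0 : ℝ) 1)))
    (huinf : MemLp uinf 2 (volume.restrict (Icc (0 : ℝ) 1)))
    (hweak : WeakL2 u uinf)
    (X : ℕ → EuclideanSpace ℝ (Fin d) → ℝ → EuclideanSpace ℝ (Fin n))
    (Xinf : EuclideanSpace ℝ (Fin d) → ℝ → EuclideanSpace ℝ (Fin n))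
    (hX : ∀ m, ∀ θ ∈ Θ, IsTrajectory F0 F x0 (u m) θ (X m θ))
    (hXinf : ∀ θ ∈ Θ, IsTrajectory F0 F x0 uinf θ (Xinf θ)) :
    TendstoUniformlyOn
      (fun m (p : ℝ × EuclideanSpace ℝ (Fin d)) => X m p.2 p.1)
      (fun p => Xinf p.2 p.1) atTop (Icc (0 : ℝ) 1 ×ˢ Θ) := by
  classical
  rcases Θ.eq_empty_or_nonempty with hΘe | ⟨θc, hθc⟩
  · rw [hΘe, prod_empty]; exact tendstoUniformlyOn_empty
  rcases eq_or_ne n 0 with hn | hn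
  · subst hn
    rw [Metric.tendstoUniformlyOn_iff]
    intro ε hε
    filter_upwards with m p _
    have : Xinf p.2 p.1 = X m p.2 p.1 := by ext i; exact i.elim0
    rw [this, dist_self]; exact hε
  have hn' : 0 < n := Nat.pos_of_ne_zero hn
  have hL : 0 ≤ L := by
    have h := hF0 (EuclideanSpace.single ⟨0, hn'⟩ (1:ℝ)) 0 θc θc hθc hθc
    rw [sub_zero, sub_self, norm_zero, add_zero, EuclideanSpace.norm_single] at h
    simpa using le_trans (norm_nonneg _) h
  have h01 : (0:ℝ) ∈ Icc (0:ℝ) 1 := ⟨le_refl _, zero_le_one⟩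
  have h11 : (1:ℝ) ∈ Icc (0:ℝ) 1 := ⟨zero_le_one, le_refl _⟩
  -- Banach–Steinhaus: uniform bound on the L² norms
  haveI : Fact ((1:ENNReal) ≤ 2) := ⟨one_le_two⟩
  obtain ⟨R, hQm, hQinf, hR0⟩ :
      ∃ R : ℝ, (∀ m, (∫ t in Icc (0:ℝ) 1, ‖u m t‖^2) ≤ R) ∧
        ((∫ t in Icc (0:ℝ) 1, ‖uinf t‖^2) ≤ R) ∧ 0 ≤ R := by
    set U : ℕ → Lp (EuclideanSpace ℝ (Fin k)) 2 (volume.restrict (Icc (0:ℝ) 1)) :=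
      fun m => (hu m).toLp with hUdef
    have hptbdd : ∀ x : Lp (EuclideanSpace ℝ (Fin k)) 2 (volume.restrict (Icc (0:ℝ) 1)),
        ∃ C, ∀ m, ‖(innerSL ℝ (U m)) x‖ ≤ C := by
      intro x
      have ht := hweak _ (Lp.memLp x)
      have heqf : ∀ m, (innerSL ℝ (U m)) x
          = ∫ t in Icc (0:ℝ) 1, (inner ℝ (x t) (u m t) : ℝ) := by
        intro m
        have h1 : (innerSL ℝ (U m)) x = (inner ℝ (U m) x : ℝ) := rfl
        rw [h1, L2.inner_def]
        apply integral_congr_ae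
        filter_upwards [(hu m).coeFn_toLp] with t ht'
        rw [ht']
        exact real_inner_comm _ _
      obtain ⟨C, hC⟩ := ht.norm.bddAbove_range
      refine ⟨C, fun m => ?_⟩
      rw [heqf m]
      exact hC (mem_range_self m)
    obtain ⟨Cop, hCop⟩ := banach_steinhaus hptbdd
    have hUle : ∀ m, ‖U m‖ ≤ Cop := by
      intro m
      rw [← innerSL_apply_norm ℝ (U m)]
      exact hCop m
    have hnorm : ∀ m, (∫ t in Icc (0:ℝ) 1, ‖u m t‖^2) = ‖U m‖^2 := by
      intro m
      have h1 : (inner ℝ (U m) (U m) : ℝ) = ‖U m‖^2 := real_inner_self_eq_norm_sq _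
      rw [L2.inner_def] at h1
      rw [← h1]
      apply integral_congr_ae
      filter_upwards [(hu m).coeFn_toLp] with t ht'
      rw [ht', real_inner_self_eq_norm_sq]
    set Qinf := ∫ t in Icc (0:ℝ) 1, ‖uinf t‖^2 with hQinfdef
    have hQinf0 : 0 ≤ Qinf :=
      setIntegral_nonneg measurableSet_Icc (fun t _ => sq_nonneg _)
    refine ⟨max (Cop^2) Qinf, fun m => ?_, le_max_right _ _,
      le_trans hQinf0 (le_max_right _ _)⟩
    rw [hnorm m]
    exact le_trans (pow_le_pow_left₀ (norm_nonneg _) (hUle m) 2) (le_max_left _ _)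
    -- square-integrability of norms
  have hsq : ∀ (v : ℝ → EuclideanSpace ℝ (Fin k)),
      MemLp v 2 (volume.restrict (Icc (0:ℝ) 1)) →
      IntegrableOn (fun t => ‖v t‖^2) (Icc (0:ℝ) 1) volume := by
    intro v hv
    have h := hv.integrable_norm_rpow two_ne_zero ENNReal.ofNat_ne_top
    have h2 : (fun t => ‖v t‖ ^ (2:ENNReal).toReal) = fun t => ‖v t‖^2 := by
      funext t
      rw [ENNReal.toReal_ofNat, show ((2:ℝ)) = ((2:ℕ):ℝ) by norm_num, Real.rpow_natCast]
    rw [h2] at h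
    exact h
  -- L¹ bounds on subsets via scaled AM–GM
  have hL1 : ∀ (v : ℝ → EuclideanSpace ℝ (Fin k)),
      MemLp v 2 (volume.restrict (Icc (0:ℝ) 1)) → ∀ Q : ℝ,
      (∫ t in Icc (0:ℝ) 1, ‖v t‖^2) ≤ Q →
      ∀ δ : ℝ, 0 < δ → ∀ S : Set ℝ, MeasurableSet S → S ⊆ Icc 0 1 →
      (∫ s in S, ‖v s‖) ≤ (δ * Q + (volume S).toReal / δ) / 2 := by
    intro v hv Q hQ δ hδ S hSm hSsub
    have hv1 : IntegrableOn v (Icc (0:ℝ) 1) volume :=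
      memLp_one_iff_integrable.mp (hv.mono_exponent one_le_two)
    have hnorm1 : IntegrableOn (fun s => ‖v s‖) (Icc (0:ℝ) 1) volume := hv1.norm
    have hnormS : IntegrableOn (fun s => ‖v s‖) S volume := hnorm1.mono_set hSsub
    have hsqS : IntegrableOn (fun s => ‖v s‖^2) S volume := (hsq v hv).mono_set hSsub
    have hSfin : volume S < ⊤ :=
      lt_of_le_of_lt (measure_mono hSsub) (by simp [Real.volume_Icc])
    have hconst : IntegrableOn (fun _ : ℝ => 1/δ) S volume :=
      integrableOn_const hSfin.ne
    have hRHSint : IntegrableOn (fun s => (δ * ‖v s‖^2 + 1/δ)/2) S volume :=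
      ((hsqS.const_mul δ).add hconst).div_const 2
    have hptw : ∀ s ∈ S, ‖v s‖ ≤ (δ * ‖v s‖^2 + 1/δ)/2 := by
      intro s _
      rw [le_div_iff₀ (by norm_num : (0:ℝ) < 2), ← sub_nonneg]
      have hid : δ*‖v s‖^2 + 1/δ - ‖v s‖*2 = (δ*‖v s‖ - 1)^2/δ := by
        field_simp; ring
      rw [hid]; positivity
    have hmono := setIntegral_mono_on hnormS hRHSint hSm hptw
    have hcalc : (∫ s in S, (δ * ‖v s‖^2 + 1/δ)/2)
        = (δ * (∫ s in S, ‖v s‖^2) + (volume S).toReal/δ)/2 := by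
      rw [integral_div, integral_add (hsqS.const_mul δ) hconst, integral_const_mul,
        setIntegral_const, smul_eq_mul, mul_one_div, measureReal_def]
    have hle : (∫ s in S, ‖v s‖^2) ≤ Q :=
      le_trans (setIntegral_mono_set (hsq v hv) (ae_of_all _ fun s => sq_nonneg _)
        (HasSubset.Subset.eventuallyLE hSsub)) hQ
    rw [hcalc] at hmono
    have := mul_le_mul_of_nonneg_left hle hδ.le
    linarith
  -- difference controls
  have hwmem : ∀ m, MemLp (fun s => u m s - uinf s) 2 (volume.restrict (Icc (0:ℝ) 1)) :=
    fun m => (hu m).sub huinf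
  set Rw := 4 * R with hRwdef
  have hRw0 : 0 ≤ Rw := by rw [hRwdef]; linarith
  have hWm : ∀ m, (∫ t in Icc (0:ℝ) 1, ‖u m t - uinf t‖^2) ≤ Rw := by
    intro m
    have hint1 := hsq _ (hwmem m)
    have hint2 : IntegrableOn (fun t => 2*‖u m t‖^2 + 2*‖uinf t‖^2) (Icc (0:ℝ) 1) volume :=
      ((hsq _ (hu m)).const_mul 2).add ((hsq _ huinf).const_mul 2)
    have hptw : ∀ t ∈ Icc (0:ℝ) 1, ‖u m t - uinf t‖^2 ≤ 2*‖u m t‖^2 + 2*‖uinf t‖^2 := by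
      intro t _
      nlinarith [norm_sub_le (u m t) (uinf t), sq_nonneg (‖u m t‖ - ‖uinf t‖),
        norm_nonneg (u m t), norm_nonneg (uinf t), norm_nonneg (u m t - uinf t)]
    have h := setIntegral_mono_on hint1 hint2 measurableSet_Icc hptw
    rw [integral_add ((hsq _ (hu m)).const_mul 2) ((hsq _ huinf).const_mul 2),
      integral_const_mul, integral_const_mul] at h
    have h1 := hQm m
    rw [hRwdef]
    linarith
  have hvol01 : (volume (Icc (0:ℝ) 1)).toReal = 1 := by simp [Real.volume_Icc]
  have hIu : ∀ m, (∫ s in Icc (0:ℝ) 1, ‖u m s‖) ≤ (R+1)/2 := by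
    intro m
    have h := hL1 (u m) (hu m) R (hQm m) 1 one_pos (Icc 0 1) measurableSet_Icc subset_rfl
    rw [hvol01] at h
    calc (∫ s in Icc (0:ℝ) 1, ‖u m s‖) ≤ (1*R + 1/1)/2 := h
      _ = (R+1)/2 := by norm_num
  have hIinf : (∫ s in Icc (0:ℝ) 1, ‖uinf s‖) ≤ (R+1)/2 := by
    have h := hL1 uinf huinf R hQinf 1 one_pos (Icc 0 1) measurableSet_Icc subset_rfl
    rw [hvol01] at h
    calc (∫ s in Icc (0:ℝ) 1, ‖uinf s‖) ≤ (1*R + 1/1)/2 := h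
      _ = (R+1)/2 := by norm_num
  have hIw : ∀ m, (∫ s in Icc (0:ℝ) 1, ‖u m s - uinf s‖) ≤ (Rw+1)/2 := by
    intro m
    have h := hL1 _ (hwmem m) Rw (hWm m) 1 one_pos (Icc 0 1) measurableSet_Icc subset_rfl
    rw [hvol01] at h
    calc (∫ s in Icc (0:ℝ) 1, ‖u m s - uinf s‖) ≤ (1*Rw + 1/1)/2 := h
      _ = (Rw+1)/2 := by norm_num
  -- the Grönwall exponent
  set C₀ := L * (1 + k * ((R+1)/2)) with hC₀def
  have hC₀0 : 0 ≤ C₀ := mul_nonneg hL (by positivity)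
  set N := ⌈2 * C₀⌉₊ with hNdef
  have hβ1 : (1:ℝ) ≤ gronConst N := one_le_gronConst N
  have hβ0 : (0:ℝ) ≤ gronConst N := le_trans zero_le_one hβ1
  have hNb : ∀ I : ℝ, 0 ≤ I → I ≤ (R+1)/2 → L * (1 + k * I) ≤ N / 2 := by
    intro I hI0 hIle
    have h1 : L * (1 + (k:ℝ) * I) ≤ C₀ := by
      rw [hC₀def]; gcongr
    have h2 : 2*C₀ ≤ (N:ℝ) := Nat.le_ceil _
    linarith
  -- θ-continuity of the limit ensemble
  have hIinf0 : (0:ℝ) ≤ ∫ s in Icc (0:ℝ) 1, ‖uinf s‖ :=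
    setIntegral_nonneg measurableSet_Icc fun s _ => norm_nonneg _
  have hXdiff : ∀ θ₁, θ₁ ∈ Θ → ∀ θ₂, θ₂ ∈ Θ → ∀ t ∈ Icc (0:ℝ) 1,
      ‖Xinf θ₁ t - Xinf θ₂ t‖ ≤ (‖x0 θ₁ - x0 θ₂‖ + C₀ * ‖θ₁ - θ₂‖) * gronConst N := by
    intro θ₁ h₁ θ₂ h₂ t ht
    refine traj_compare Θ F0 F L hL hF0 hF x0 h₁ h₂ huinf huinf
      (hXinf θ₁ h₁) (hXinf θ₂ h₂) N (hNb _ hIinf0 hIinf) _ ?_ t ht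
    intro t' ht'
    have hz : (∫ s in (0:ℝ)..t', ∑ i, (uinf s i - uinf s i) • F i (Xinf θ₂ s) θ₂)
        = 0 := by simp
    rw [hz, norm_zero, add_zero]
    have hc : L * (1 + (k:ℝ) * ∫ s in Icc (0:ℝ) 1, ‖uinf s‖) ≤ C₀ := by
      rw [hC₀def]; gcongr
    have hg : (0:ℝ) ≤ ‖θ₁ - θ₂‖ := norm_nonneg _
    nlinarith [mul_le_mul_of_nonneg_right hc hg]
  -- uniform bounds
  obtain ⟨MΘ, hMΘ⟩ := hΘ.exists_bound_of_continuousOn continuousOn_id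
  obtain ⟨Mx0, hMx0⟩ := hΘ.exists_bound_of_continuousOn hx0
  obtain ⟨Mc, hMc⟩ := isCompact_Icc.exists_bound_of_continuousOn (hXinf θc hθc).1
  have hMΘ0 : 0 ≤ MΘ := le_trans (norm_nonneg θc) (hMΘ θc hθc)
  have hMx00 : 0 ≤ Mx0 := le_trans (norm_nonneg _) (hMx0 θc hθc)
  have hMc0 : 0 ≤ Mc := le_trans (norm_nonneg _) (hMc 0 h01)
  set MX := Mc + (2*Mx0 + C₀*(2*MΘ)) * gronConst N with hMXdef
  have hMX : ∀ θ₁, θ₁ ∈ Θ → ∀ t ∈ Icc (0:ℝ) 1, ‖Xinf θ₁ t‖ ≤ MX := by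
    intro θ₁ h₁ t ht
    have h := hXdiff θ₁ h₁ θc hθc t ht
    have htri : ‖Xinf θ₁ t‖ ≤ ‖Xinf θc t‖ + ‖Xinf θ₁ t - Xinf θc t‖ := by
      have h2 : Xinf θ₁ t = Xinf θc t + (Xinf θ₁ t - Xinf θc t) := by abel
      calc ‖Xinf θ₁ t‖ = ‖Xinf θc t + (Xinf θ₁ t - Xinf θc t)‖ := by rw [← h2]
        _ ≤ _ := norm_add_le _ _
    have hx0d : ‖x0 θ₁ - x0 θc‖ ≤ 2*Mx0 :=
      le_trans (norm_sub_le _ _) (by linarith [hMx0 θ₁ h₁, hMx0 θc hθc])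
    have hθd : ‖θ₁ - θc‖ ≤ 2*MΘ :=
      le_trans (norm_sub_le _ _) (by
        have g1 := hMΘ θ₁ h₁
        have g2 := hMΘ θc hθc
        simp only [id] at g1 g2
        linarith)
    have hle : (‖x0 θ₁ - x0 θc‖ + C₀ * ‖θ₁ - θc‖) * gronConst N
        ≤ (2*Mx0 + C₀*(2*MΘ)) * gronConst N := by
      apply mul_le_mul_of_nonneg_right _ hβ0
      exact add_le_add hx0d (mul_le_mul_of_nonneg_left hθd hC₀0)
    rw [hMXdef]
    linarith [hMc t ht]
  have hMX0 : 0 ≤ MX := le_trans (norm_nonneg _) (hMX θc hθc 0 h01)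
  set MF := ∑ i, ‖F i (0 : EuclideanSpace ℝ (Fin n)) θc‖ with hMFdef
  have hMF : ∀ i, ‖F i (0:EuclideanSpace ℝ (Fin n)) θc‖ ≤ MF := fun i =>
    Finset.single_le_sum (f := fun i => ‖F i (0:EuclideanSpace ℝ (Fin n)) θc‖)
      (fun j _ => norm_nonneg _) (Finset.mem_univ i)
  have hMF0 : 0 ≤ MF := Finset.sum_nonneg fun i _ => norm_nonneg _
  set B := MF + L * (MX + 2*MΘ) with hBdef
  have hB0 : 0 ≤ B := by
    rw [hBdef]
    have := mul_nonneg hL (by linarith : (0:ℝ) ≤ MX + 2*MΘ)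
    linarith
  have hbB : ∀ (i : Fin k), ∀ θ₁, θ₁ ∈ Θ → ∀ t ∈ Icc (0:ℝ) 1,
      ‖F i (Xinf θ₁ t) θ₁‖ ≤ B := by
    intro i θ₁ h₁ t ht
    have h2 := hF i (Xinf θ₁ t) 0 θ₁ θc h₁ hθc
    rw [sub_zero] at h2
    have htri : ‖F i (Xinf θ₁ t) θ₁‖
        ≤ ‖F i 0 θc‖ + ‖F i (Xinf θ₁ t) θ₁ - F i 0 θc‖ := by
      have he : F i (Xinf θ₁ t) θ₁ = F i 0 θc + (F i (Xinf θ₁ t) θ₁ - F i 0 θc) := by abel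
      calc ‖F i (Xinf θ₁ t) θ₁‖ = ‖F i 0 θc + (F i (Xinf θ₁ t) θ₁ - F i 0 θc)‖ := by
            rw [← he]
        _ ≤ _ := norm_add_le _ _
    have hθd : ‖θ₁ - θc‖ ≤ 2*MΘ :=
      le_trans (norm_sub_le _ _) (by
        have g1 := hMΘ θ₁ h₁
        have g2 := hMΘ θc hθc
        simp only [id] at g1 g2
        linarith)
    have h3 : L * (‖Xinf θ₁ t‖ + ‖θ₁ - θc‖) ≤ L * (MX + 2*MΘ) := by
      apply mul_le_mul_of_nonneg_left _ hL
      exact add_le_add (hMX θ₁ h₁ t ht) hθd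
    rw [hBdef]
    linarith [hMF i]
    -- the weak-convergence functional G
  have hFi_cont : ∀ (i : Fin k), ∀ ϑ, ϑ ∈ Θ →
      ContinuousOn (fun s => F i (Xinf ϑ s) ϑ) (Icc 0 1) := by
    intro i ϑ hϑ
    exact (lip_continuous (G := fun v => F i v ϑ) (fun x₁ x₂ => by
      simpa using hF i x₁ x₂ ϑ ϑ hϑ hϑ)).comp_continuousOn (hXinf ϑ hϑ).1
  set G : ℕ → ℝ → EuclideanSpace ℝ (Fin d) → EuclideanSpace ℝ (Fin n) :=
    fun m t ϑ => ∫ s in (0:ℝ)..t, ∑ i, (u m s i - uinf s i) • F i (Xinf ϑ s) ϑ with hGdef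
  have hGint : ∀ m ϑ, ϑ ∈ Θ →
      IntegrableOn (fun s => ∑ i, (u m s i - uinf s i) • F i (Xinf ϑ s) ϑ)
        (Icc (0:ℝ) 1) volume :=
    fun m ϑ hϑ => integrableOn_ctrl_smul (hwmem m) (fun i => hFi_cont i ϑ hϑ)
  have hw1 : ∀ m, IntegrableOn (fun s => ‖u m s - uinf s‖) (Icc (0:ℝ) 1) volume :=
    fun m => (memLp_one_iff_integrable.mp
      ((hwmem m).mono_exponent one_le_two)).norm
  have hw10 : ∀ m, ∀ t ∈ Icc (0:ℝ) 1,
      (∫ s in Icc (0:ℝ) t, ‖u m s - uinf s‖) ≤ (Rw+1)/2 := by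
    intro m t ht
    refine le_trans (setIntegral_mono_set (hw1 m) (ae_of_all _ fun s => norm_nonneg _)
      (HasSubset.Subset.eventuallyLE (Icc_subset_Icc_right ht.2))) (hIw m)
  -- time equicontinuity of G
  have hd1 : ∀ m ϑ, ϑ ∈ Θ → ∀ t' ∈ Icc (0:ℝ) 1, ∀ t ∈ Icc (0:ℝ) 1, t' ≤ t →
      ‖G m t ϑ - G m t' ϑ‖ ≤ k * B * ∫ s in Icc t' t, ‖u m s - uinf s‖ := by
    intro m ϑ hϑ t' ht' t ht htt
    have hint := hGint m ϑ hϑ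
    have hII1 := (hint.mono_set (uIcc_subset_Icc h01 ht)).intervalIntegrable
    have hII2 := (hint.mono_set (uIcc_subset_Icc h01 ht')).intervalIntegrable
    have hIId := (hint.mono_set (uIcc_subset_Icc ht' ht)).intervalIntegrable
    have hkB : IntegrableOn (fun s => k * B * ‖u m s - uinf s‖) (Icc (0:ℝ) 1) volume :=
      Integrable.const_mul (hw1 m) (k*B)
    have hIIr := (hkB.mono_set (uIcc_subset_Icc ht' ht)).intervalIntegrable
    have hGsub : G m t ϑ - G m t' ϑ
        = ∫ s in t'..t, ∑ i, (u m s i - uinf s i) • F i (Xinf ϑ s) ϑ :=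
      intervalIntegral.integral_interval_sub_left hII1 hII2
    rw [hGsub]
    have hptw : ∀ s ∈ Icc t' t,
        ‖∑ i, (u m s i - uinf s i) • F i (Xinf ϑ s) ϑ‖ ≤ k*B*‖u m s - uinf s‖ := by
      intro s hs
      have hs01 : s ∈ Icc (0:ℝ) 1 := ⟨le_trans ht'.1 hs.1, le_trans hs.2 ht.2⟩
      exact sum_smul_bound (u m s - uinf s) (fun i => F i (Xinf ϑ s) ϑ)
        (fun i => hbB i ϑ hϑ s hs01)
    calc ‖∫ s in t'..t, ∑ i, (u m s i - uinf s i) • F i (Xinf ϑ s) ϑ‖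
        ≤ ∫ s in t'..t, ‖∑ i, (u m s i - uinf s i) • F i (Xinf ϑ s) ϑ‖ :=
          intervalIntegral.norm_integral_le_integral_norm htt
      _ ≤ ∫ s in t'..t, k*B*‖u m s - uinf s‖ :=
          intervalIntegral.integral_mono_on htt hIId.norm hIIr hptw
      _ = k * B * ∫ s in Icc t' t, ‖u m s - uinf s‖ := by
          rw [intervalIntegral.integral_of_le htt, ← integral_Icc_eq_integral_Ioc,
            integral_const_mul]
  -- θ equicontinuity of G
  have hd2 : ∀ m, ∀ t ∈ Icc (0:ℝ) 1, ∀ θ₁, θ₁ ∈ Θ → ∀ θ₂, θ₂ ∈ Θ →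
      ‖G m t θ₁ - G m t θ₂‖ ≤ k * (L * ((‖x0 θ₁ - x0 θ₂‖ + C₀ * ‖θ₁ - θ₂‖)
        * gronConst N + ‖θ₁ - θ₂‖)) * ((Rw+1)/2) := by
    intro m t ht θ₁ h₁ θ₂ h₂
    set D := L * ((‖x0 θ₁ - x0 θ₂‖ + C₀ * ‖θ₁ - θ₂‖) * gronConst N + ‖θ₁ - θ₂‖)
      with hDdef
    have hD0 : 0 ≤ D := by
      apply mul_nonneg hL
      have h1 : 0 ≤ (‖x0 θ₁ - x0 θ₂‖ + C₀ * ‖θ₁ - θ₂‖) * gronConst N :=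
        mul_nonneg (by positivity) hβ0
      positivity
    have hint1 := hGint m θ₁ h₁
    have hint2 := hGint m θ₂ h₂
    have hII1 := (hint1.mono_set (uIcc_subset_Icc h01 ht)).intervalIntegrable
    have hII2 := (hint2.mono_set (uIcc_subset_Icc h01 ht)).intervalIntegrable
    have hintd : IntegrableOn (fun s => ∑ i, (u m s i - uinf s i) •
        (F i (Xinf θ₁ s) θ₁ - F i (Xinf θ₂ s) θ₂)) (Icc (0:ℝ) 1) volume :=
      integrableOn_ctrl_smul (hwmem m)
        (b := fun s i => F i (Xinf θ₁ s) θ₁ - F i (Xinf θ₂ s) θ₂)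
        (fun i => (hFi_cont i θ₁ h₁).sub (hFi_cont i θ₂ h₂))
    have hIId := (hintd.mono_set (uIcc_subset_Icc h01 ht)).intervalIntegrable
    have hkD : IntegrableOn (fun s => k * D * ‖u m s - uinf s‖) (Icc (0:ℝ) 1) volume :=
      Integrable.const_mul (hw1 m) (k*D)
    have hIIr := (hkD.mono_set (uIcc_subset_Icc h01 ht)).intervalIntegrable
    have heq : G m t θ₁ - G m t θ₂ = ∫ s in (0:ℝ)..t, ∑ i, (u m s i - uinf s i) •
        (F i (Xinf θ₁ s) θ₁ - F i (Xinf θ₂ s) θ₂) := by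
      rw [← intervalIntegral.integral_sub hII1 hII2]
      apply intervalIntegral.integral_congr
      intro s _
      simp [smul_sub, Finset.sum_sub_distrib]
    rw [heq]
    have hptw : ∀ s ∈ Icc (0:ℝ) t, ‖∑ i, (u m s i - uinf s i) •
        (F i (Xinf θ₁ s) θ₁ - F i (Xinf θ₂ s) θ₂)‖ ≤ k*D*‖u m s - uinf s‖ := by
      intro s hs
      have hs01 : s ∈ Icc (0:ℝ) 1 := ⟨hs.1, le_trans hs.2 ht.2⟩
      apply sum_smul_bound (u m s - uinf s)
        (fun i => F i (Xinf θ₁ s) θ₁ - F i (Xinf θ₂ s) θ₂)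
      intro i
      calc ‖F i (Xinf θ₁ s) θ₁ - F i (Xinf θ₂ s) θ₂‖
          ≤ L * (‖Xinf θ₁ s - Xinf θ₂ s‖ + ‖θ₁ - θ₂‖) := hF i _ _ _ _ h₁ h₂
        _ ≤ D := by
            rw [hDdef]
            apply mul_le_mul_of_nonneg_left _ hL
            exact add_le_add_left (hXdiff θ₁ h₁ θ₂ h₂ s hs01) _
    calc ‖∫ s in (0:ℝ)..t, ∑ i, (u m s i - uinf s i) •
          (F i (Xinf θ₁ s) θ₁ - F i (Xinf θ₂ s) θ₂)‖
        ≤ ∫ s in (0:ℝ)..t, ‖∑ i, (u m s i - uinf s i) •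
          (F i (Xinf θ₁ s) θ₁ - F i (Xinf θ₂ s) θ₂)‖ :=
          intervalIntegral.norm_integral_le_integral_norm ht.1
      _ ≤ ∫ s in (0:ℝ)..t, k*D*‖u m s - uinf s‖ :=
          intervalIntegral.integral_mono_on ht.1 hIId.norm hIIr hptw
      _ = k * D * ∫ s in Icc (0:ℝ) t, ‖u m s - uinf s‖ := by
          rw [intervalIntegral.integral_of_le ht.1, ← integral_Icc_eq_integral_Ioc,
            integral_const_mul]
      _ ≤ k * D * ((Rw+1)/2) :=
          mul_le_mul_of_nonneg_left (hw10 m t ht) (mul_nonneg (Nat.cast_nonneg k) hD0)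
    -- pointwise convergence of G to 0
  have hptG : ∀ t, t ∈ Icc (0:ℝ) 1 → ∀ ϑ, ϑ ∈ Θ →
      Tendsto (fun m => G m t ϑ) atTop (𝓝 0) := by
    intro t ht ϑ hϑ
    have hcoord : ∀ j : Fin n, Tendsto (fun m => (G m t ϑ) j) atTop (𝓝 0) := by
      intro j
      set vec : ℝ → EuclideanSpace ℝ (Fin k) :=
        fun s => (EuclideanSpace.equiv (Fin k) ℝ).symm
          (fun i => F i (Xinf ϑ s) ϑ j) with hvecdef
      have hveci : ∀ s i, vec s i = F i (Xinf ϑ s) ϑ j := fun s i => rfl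
      set v : ℝ → EuclideanSpace ℝ (Fin k) := (Icc (0:ℝ) t).indicator vec with hvdef
      have hveccont : ContinuousOn vec (Icc (0:ℝ) 1) := by
        apply (EuclideanSpace.equiv (Fin k) ℝ).symm.continuous.comp_continuousOn
        apply continuousOn_pi.2
        intro i
        exact (EuclideanSpace.proj j).continuous.comp_continuousOn (hFi_cont i ϑ hϑ)
      have hvmeas : AEStronglyMeasurable v (volume.restrict (Icc (0:ℝ) 1)) :=
        (hveccont.aestronglyMeasurable measurableSet_Icc).indicator measurableSet_Icc
      have hvmem : MemLp v 2 (volume.restrict (Icc (0:ℝ) 1)) := by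
        apply MemLp.of_bound hvmeas (Real.sqrt k * B)
        apply ae_of_all
        intro s
        rw [hvdef]
        by_cases hs : s ∈ Icc (0:ℝ) t
        · rw [Set.indicator_of_mem hs]
          have hs01 : s ∈ Icc (0:ℝ) 1 := ⟨hs.1, le_trans hs.2 ht.2⟩
          apply euclid_norm_le _ hB0
          intro i
          rw [hveci]
          exact le_trans (coord_le_norm _ j) (hbB i ϑ hϑ s hs01)
        · rw [Set.indicator_of_notMem hs, norm_zero]
          positivity
      have hwk := hweak v hvmem
      have hid : ∀ (z : ℝ → EuclideanSpace ℝ (Fin k)),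
          MemLp z 2 (volume.restrict (Icc (0:ℝ) 1)) →
          (∫ s in Icc (0:ℝ) 1, (inner ℝ (v s) (z s) : ℝ))
            = (∫ s in Icc (0:ℝ) t, ∑ i, z s i • F i (Xinf ϑ s) ϑ) j := by
        intro z hz
        have hzint : IntegrableOn (fun s => ∑ i, z s i • F i (Xinf ϑ s) ϑ)
            (Icc (0:ℝ) 1) volume :=
          integrableOn_ctrl_smul hz (fun i => hFi_cont i ϑ hϑ)
        have hzt : IntegrableOn (fun s => ∑ i, z s i • F i (Xinf ϑ s) ϑ)
            (Icc (0:ℝ) t) volume := hzint.mono_set (Icc_subset_Icc_right ht.2)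
        have h1 : (fun s => (inner ℝ (v s) (z s) : ℝ))
            = (Icc (0:ℝ) t).indicator (fun s => (inner ℝ (vec s) (z s) : ℝ)) := by
          funext s
          by_cases hs : s ∈ Icc (0:ℝ) t
          · rw [Set.indicator_of_mem hs, hvdef, Set.indicator_of_mem hs]
          · rw [Set.indicator_of_notMem hs, hvdef, Set.indicator_of_notMem hs,
              inner_zero_left]
        rw [h1, setIntegral_indicator measurableSet_Icc,
          inter_eq_self_of_subset_right (Icc_subset_Icc_right ht.2)]
        have h2 : (fun s => (inner ℝ (vec s) (z s) : ℝ))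
            = fun s => (EuclideanSpace.proj j) (∑ i, z s i • F i (Xinf ϑ s) ϑ) := by
          funext s
          rw [PiLp.inner_apply]
          have h3 : (EuclideanSpace.proj j) (∑ i, z s i • F i (Xinf ϑ s) ϑ)
              = ∑ i, z s i * (F i (Xinf ϑ s) ϑ j) := by
            rw [map_sum]
            apply Finset.sum_congr rfl
            intro i _
            rw [ContinuousLinearMap.map_smul]
            rfl
          rw [h3]
          apply Finset.sum_congr rfl
          intro i _
          rw [hveci, RCLike.inner_apply, conj_trivial]
        rw [h2, ContinuousLinearMap.integral_comp_comm _ hzt]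
        rfl
      have hGcoord : ∀ m, (G m t ϑ) j
          = (∫ s in Icc (0:ℝ) 1, (inner ℝ (v s) (u m s) : ℝ))
            - (∫ s in Icc (0:ℝ) 1, (inner ℝ (v s) (uinf s) : ℝ)) := by
        intro m
        rw [hid (u m) (hu m), hid uinf huinf]
        have hu_t : IntegrableOn (fun s => ∑ i, u m s i • F i (Xinf ϑ s) ϑ)
            (Icc (0:ℝ) t) volume :=
          (integrableOn_ctrl_smul (hu m) (fun i => hFi_cont i ϑ hϑ)).mono_set
            (Icc_subset_Icc_right ht.2)
        have hinf_t : IntegrableOn (fun s => ∑ i, uinf s i • F i (Xinf ϑ s) ϑ)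
            (Icc (0:ℝ) t) volume :=
          (integrableOn_ctrl_smul huinf (fun i => hFi_cont i ϑ hϑ)).mono_set
            (Icc_subset_Icc_right ht.2)
        have hGm : G m t ϑ = (∫ s in Icc (0:ℝ) t, ∑ i, u m s i • F i (Xinf ϑ s) ϑ)
            - (∫ s in Icc (0:ℝ) t, ∑ i, uinf s i • F i (Xinf ϑ s) ϑ) := by
          rw [show G m t ϑ = ∫ s in (0:ℝ)..t, ∑ i, (u m s i - uinf s i) •
              F i (Xinf ϑ s) ϑ from rfl,
            intervalIntegral.integral_of_le ht.1, ← integral_Icc_eq_integral_Ioc,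
            ← integral_sub hu_t hinf_t]
          congr 1
          funext s
          simp [sub_smul, Finset.sum_sub_distrib]
        rw [hGm]
        rfl
      have hconv := hwk.sub_const (∫ s in Icc (0:ℝ) 1, (inner ℝ (v s) (uinf s) : ℝ))
      rw [sub_self] at hconv
      exact hconv.congr (fun m => (hGcoord m).symm)
    have hpi : Tendsto (fun m => (fun j => (G m t ϑ) j : Fin n → ℝ)) atTop
        (𝓝 (fun _ => 0)) := tendsto_pi_nhds.2 (fun j => hcoord j)
    have hsymm := ((EuclideanSpace.equiv (Fin n) ℝ).symm.continuous.tendsto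
      (fun _ => (0:ℝ))).comp hpi
    have h0 : (EuclideanSpace.equiv (Fin n) ℝ).symm (fun _ => (0:ℝ)) = 0 := rfl
    rw [h0] at hsymm
    exact hsymm
    -- uniform smallness of G
  have hGunif : ∀ ε' : ℝ, 0 < ε' → ∀ᶠ m in atTop,
      ∀ t ∈ Icc (0:ℝ) 1, ∀ ϑ ∈ Θ, ‖G m t ϑ‖ ≤ ε' := by
    intro ε' hε'
    set K : Set (ℝ × EuclideanSpace ℝ (Fin d)) := Icc (0:ℝ) 1 ×ˢ Θ with hKdef
    have hKcomp : IsCompact K := isCompact_Icc.prod hΘ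
    set W1 := (Rw+1)/2 with hW1def
    have hW10 : 0 ≤ W1 := by rw [hW1def]; linarith
    have hloc : ∀ p : ℝ × EuclideanSpace ℝ (Fin d), p ∈ K → ∃ r > 0, ∀ m,
        ∀ q : ℝ × EuclideanSpace ℝ (Fin d), q ∈ K → dist q p < r →
        ‖G m q.1 q.2 - G m p.1 p.2‖ ≤ ε'/2 := by
      intro p hp
      have ht₀ : p.1 ∈ Icc (0:ℝ) 1 := hp.1
      have hϑ₀ : p.2 ∈ Θ := hp.2
      set c1 := (k:ℝ) * B + 1 with hc1def
      have hc10 : (0:ℝ) < c1 := by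
        rw [hc1def]
        have : (0:ℝ) ≤ (k:ℝ)*B := mul_nonneg (Nat.cast_nonneg k) hB0
        linarith
      set δ := ε' / (8 * c1 * (Rw + 1)) with hδdef
      have hδ0 : 0 < δ := by
        rw [hδdef]
        apply div_pos hε'
        have : (0:ℝ) < Rw + 1 := by linarith
        positivity
      set r1 := δ * δ with hr1def
      have hr10 : 0 < r1 := mul_pos hδ0 hδ0
      have htime : ∀ m, ∀ t' ∈ Icc (0:ℝ) 1, ∀ t ∈ Icc (0:ℝ) 1, |t - t'| < r1 →
          ∀ ϑ₁ ∈ Θ, ‖G m t ϑ₁ - G m t' ϑ₁‖ ≤ ε'/4 := by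
        have haux : ∀ m, ∀ a ∈ Icc (0:ℝ) 1, ∀ b ∈ Icc (0:ℝ) 1, a ≤ b → b - a < r1 →
            ∀ ϑ₁ ∈ Θ, ‖G m b ϑ₁ - G m a ϑ₁‖ ≤ ε'/4 := by
          intro m a ha b hb hab hlt ϑ₁ hϑ₁
          have h := hd1 m ϑ₁ hϑ₁ a ha b hb hab
          have hba0 : (0:ℝ) ≤ b - a := by linarith
          have hS : (∫ s in Icc a b, ‖u m s - uinf s‖) ≤ (δ * Rw + (b-a)/δ)/2 := by
            have h2 := hL1 _ (hwmem m) Rw (hWm m) δ hδ0 (Icc a b) measurableSet_Icc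
              (Icc_subset_Icc ha.1 hb.2)
            rwa [Real.volume_Icc, ENNReal.toReal_ofReal hba0] at h2
          have hkB0 : (0:ℝ) ≤ (k:ℝ)*B := mul_nonneg (Nat.cast_nonneg k) hB0
          have hlt' : b - a < δ * δ := by rw [hr1def] at hlt; exact hlt
          have hba : (b-a)/δ ≤ δ := by
            rw [div_le_iff₀ hδ0]; nlinarith
          have hX0 : (0:ℝ) ≤ δ*Rw + (b-a)/δ :=
            add_nonneg (mul_nonneg hδ0.le hRw0) (div_nonneg hba0 hδ0.le)
          have h3 : δ*Rw + (b-a)/δ ≤ δ*(Rw+1) := by nlinarith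
          have hkBc1 : (k:ℝ)*B ≤ c1 := by rw [hc1def]; linarith
          have h5 : c1*(δ*(Rw+1)) = ε'/8 := by
            rw [hδdef]
            have hne1 : c1 ≠ 0 := ne_of_gt hc10
            have hne2 : Rw + 1 ≠ 0 := by intro hcon; linarith
            field_simp
          have h4 : (k:ℝ)*B*((δ*Rw + (b-a)/δ)/2) ≤ c1*(δ*(Rw+1)) := by
            nlinarith [mul_le_mul_of_nonneg_left h3 hc10.le,
              mul_le_mul_of_nonneg_right hkBc1 hX0]
          calc ‖G m b ϑ₁ - G m a ϑ₁‖ ≤ (k:ℝ)*B*∫ s in Icc a b, ‖u m s - uinf s‖ := h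
            _ ≤ (k:ℝ)*B*((δ*Rw + (b-a)/δ)/2) := mul_le_mul_of_nonneg_left hS hkB0
            _ ≤ c1*(δ*(Rw+1)) := h4
            _ = ε'/8 := h5
            _ ≤ ε'/4 := by linarith
        intro m t' ht' t ht habs ϑ₁ hϑ₁
        rcases le_total t' t with hor | hor
        · refine haux m t' ht' t ht hor ?_ ϑ₁ hϑ₁
          rw [abs_of_nonneg (by linarith)] at habs; linarith
        · rw [norm_sub_rev]
          refine haux m t ht t' ht' hor ?_ ϑ₁ hϑ₁
          rw [abs_of_nonpos (by linarith)] at habs; linarith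
      set φ : EuclideanSpace ℝ (Fin d) → ℝ := fun ϑ₁ =>
        (k:ℝ) * (L * ((‖x0 ϑ₁ - x0 p.2‖ + C₀ * ‖ϑ₁ - p.2‖) * gronConst N
          + ‖ϑ₁ - p.2‖)) * W1 with hφdef
      have hn1 : ContinuousWithinAt (fun ϑ₁ => ‖x0 ϑ₁ - x0 p.2‖) Θ p.2 :=
        ((hx0 p.2 hϑ₀).sub continuousWithinAt_const).norm
      have hn2 : ContinuousWithinAt (fun ϑ₁ : EuclideanSpace ℝ (Fin d) => ‖ϑ₁ - p.2‖)
          Θ p.2 := (continuousWithinAt_id.sub continuousWithinAt_const).norm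
      have hφcont : ContinuousWithinAt φ Θ p.2 :=
        (continuousWithinAt_const.mul (continuousWithinAt_const.mul
          (((hn1.add (continuousWithinAt_const.mul hn2)).mul
            continuousWithinAt_const).add hn2))).mul continuousWithinAt_const
      have hφ0 : φ p.2 = 0 := by simp [hφdef]
      have hev : ∀ᶠ ϑ₁ in 𝓝[Θ] p.2, φ ϑ₁ < ε'/4 := by
        apply hφcont.eventually_lt_const
        rw [hφ0]
        positivity
      obtain ⟨r2, hr20, hr2⟩ := Metric.mem_nhdsWithin_iff.1 hev
      refine ⟨min r1 r2, lt_min hr10 hr20, ?_⟩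
      intro m q hq hdist
      have hqt : q.1 ∈ Icc (0:ℝ) 1 := hq.1
      have hqϑ : q.2 ∈ Θ := hq.2
      have hdd : max (dist q.1 p.1) (dist q.2 p.2) < min r1 r2 := by
        rw [← Prod.dist_eq]; exact hdist
      have hd1' : dist q.1 p.1 < r1 :=
        lt_of_lt_of_le (lt_of_le_of_lt (le_max_left _ _) hdd) (min_le_left _ _)
      have hd2' : dist q.2 p.2 < r2 :=
        lt_of_lt_of_le (lt_of_le_of_lt (le_max_right _ _) hdd) (min_le_right _ _)
      have h1 : ‖G m q.1 q.2 - G m p.1 q.2‖ ≤ ε'/4 := by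
        apply htime m p.1 ht₀ q.1 hqt _ q.2 hqϑ
        rwa [Real.dist_eq] at hd1'
      have h2 : ‖G m p.1 q.2 - G m p.1 p.2‖ ≤ ε'/4 := by
        have h := hd2 m p.1 ht₀ q.2 hqϑ p.2 hϑ₀
        have hφq : φ q.2 < ε'/4 := hr2 ⟨Metric.mem_ball.2 hd2', hqϑ⟩
        calc ‖G m p.1 q.2 - G m p.1 p.2‖ ≤ φ q.2 := h
          _ ≤ ε'/4 := hφq.le
      have h3 : G m q.1 q.2 - G m p.1 p.2
          = (G m q.1 q.2 - G m p.1 q.2) + (G m p.1 q.2 - G m p.1 p.2) := by abel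
      rw [h3]
      calc ‖(G m q.1 q.2 - G m p.1 q.2) + (G m p.1 q.2 - G m p.1 p.2)‖
          ≤ ‖G m q.1 q.2 - G m p.1 q.2‖ + ‖G m p.1 q.2 - G m p.1 p.2‖ := norm_add_le _ _
        _ ≤ ε'/2 := by linarith
    choose! r hr0 hrb using hloc
    have hcover : K ⊆ ⋃ p ∈ K, Metric.ball p (r p) := by
      intro p hp
      exact mem_biUnion hp (Metric.mem_ball_self (hr0 p hp))
    obtain ⟨P, hPK, hPfin, hPcov⟩ := hKcomp.elim_finite_subcover_image
      (fun p _ => Metric.isOpen_ball) hcover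
    have hevP : ∀ᶠ m in atTop, ∀ p ∈ P, ‖G m p.1 p.2‖ < ε'/2 := by
      rw [eventually_all_finite hPfin]
      intro p hp
      have hpK := hPK hp
      have htd := (hptG p.1 hpK.1 p.2 hpK.2).norm
      rw [norm_zero] at htd
      exact htd.eventually_lt_const (by positivity)
    filter_upwards [hevP] with m hm t ht ϑ hϑ
    have hqK : ((t,ϑ) : ℝ × EuclideanSpace ℝ (Fin d)) ∈ K := ⟨ht, hϑ⟩
    obtain ⟨p, hpP, hpball⟩ := mem_iUnion₂.1 (hPcov hqK)
    have hpK := hPK hpP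
    have h1 := hrb p hpK m (t,ϑ) hqK (Metric.mem_ball.1 hpball)
    have h2 := hm p hpP
    have h3 : G m t ϑ = (G m t ϑ - G m p.1 p.2) + G m p.1 p.2 := by abel
    calc ‖G m t ϑ‖ = ‖(G m t ϑ - G m p.1 p.2) + G m p.1 p.2‖ := by rw [← h3]
      _ ≤ ‖G m t ϑ - G m p.1 p.2‖ + ‖G m p.1 p.2‖ := norm_add_le _ _
      _ ≤ ε' := by linarith
  -- conclusion
  rw [Metric.tendstoUniformlyOn_iff]
  intro ε hε
  have hβpos : (0:ℝ) < gronConst N := lt_of_lt_of_le zero_lt_one hβ1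
  set ε' := ε / (2 * gronConst N) with hε'def
  have hε'0 : 0 < ε' := by rw [hε'def]; positivity
  filter_upwards [hGunif ε' hε'0] with m hm
  rintro ⟨t, ϑ⟩ hp
  have ht : t ∈ Icc (0:ℝ) 1 := hp.1
  have hϑ : ϑ ∈ Θ := hp.2
  have hIu0 : (0:ℝ) ≤ ∫ s in Icc (0:ℝ) 1, ‖u m s‖ :=
    setIntegral_nonneg measurableSet_Icc fun s _ => norm_nonneg _
  have hcomp := traj_compare Θ F0 F L hL hF0 hF x0 hϑ hϑ (hu m) huinf
    (hX m ϑ hϑ) (hXinf ϑ hϑ) N (hNb _ hIu0 (hIu m)) ε' ?_ t ht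
  · have hhalf : ε' * gronConst N = ε/2 := by
      rw [hε'def]
      field_simp
    calc dist (Xinf ϑ t) (X m ϑ t) = ‖X m ϑ t - Xinf ϑ t‖ := by
          rw [dist_eq_norm, norm_sub_rev]
      _ ≤ ε' * gronConst N := hcomp
      _ = ε/2 := hhalf
      _ < ε := by linarith
  · intro t' ht'
    rw [sub_self, norm_zero, sub_self, norm_zero, mul_zero, zero_add, zero_add]
    exact hm t' ht' ϑ hϑ
end
end

section
/- Consider the ensemble of 2D linear systems ẋ^θ = A^θ x^θ + b₁u₁ + b₂u₂ with A^θ = [[0,1],[θ,0]], b₁ = (1,0)ᵀ, b₂ = (0,1)ᵀ. For any N ≥ 1 and any distinct parameters θ₁,…,θ_N ∈ Θ, the block-diagonal system on ℝ^{2N} with matrix A^N = diag(A^{θ₁},…,A^{θ_N}) and stacked control vectors b₁ = (b₁,…,b₁)ᵀ, b₂ = (b₂,…,b₂)ᵀ satisfies the Kalman rank condition: span{(A^N)^r b₁, (A^N)^r b₂ : 0 ≤ r ≤ 2N−1} = ℝ^{2N}. Consequently, for any target y_tar ∈ ℝ^{2N} there exists a control ū ∈ L²([0,1],ℝ²) steering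 the stacked system from any initial state to y_tar at time 1. -/
open MeasureTheory Set Filter Topology

noncomputable section

/-- The matrix `A^θ = [[0,1],[θ,0]]`. -/
def Amat (θ : ℝ) : Matrix (Fin 2) (Fin 2) ℝ := !![0, 1; θ, 0]

/-- The block-diagonal matrix `A^N = diag(A^{θ₁},…,A^{θ_N})` on `ℝ^{2N}`,
indexed by `Fin N × Fin 2`. -/
def blockA {N : ℕ} (θs : Fin N → ℝ) : Matrix (Fin N × Fin 2) (Fin N × Fin 2) ℝ :=
  fun p q => if p.1 = q.1 then Amat (θs p.1) p.2 q.2 else 0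

/-- The stacked control vector `𝐛ᵢ = (bᵢ,…,bᵢ)ᵀ ∈ ℝ^{2N}` with `b₁ = (1,0)ᵀ`,
`b₂ = (0,1)ᵀ`. -/
def bstack {N : ℕ} (i : Fin 2) : Fin N × Fin 2 → ℝ := fun p => if p.2 = i then 1 else 0

section Aux
open Matrix NormedSpace

lemma blockA_sq {N : ℕ} (θs : Fin N → ℝ) :
    blockA θs * blockA θs = Matrix.diagonal (fun p => θs p.1) := by
  ext ⟨j, a⟩ ⟨j', a'⟩
  simp only [Matrix.mul_apply, Fintype.sum_prod_type, blockA, Amat, Matrix.diagonal]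
  fin_cases a <;> fin_cases a' <;>
    simp [Finset.sum_ite_eq, Finset.sum_ite_eq', Fin.sum_univ_two, Prod.ext_iff] <;>
    by_cases h : j = j' <;> simp [h]

lemma blockA_pow_two_mul {N : ℕ} (θs : Fin N → ℝ) (k : ℕ) :
    blockA θs ^ (2 * k) = Matrix.diagonal (fun p => θs p.1 ^ k) := by
  rw [pow_mul, pow_two, blockA_sq, Matrix.diagonal_pow]
  rfl

lemma blockA_pow_mulVec_bstack {N : ℕ} (θs : Fin N → ℝ) (k : ℕ) (i : Fin 2) :
    (blockA θs ^ (2 * k)).mulVec (bstack i) =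
      fun p => θs p.1 ^ k * bstack i p := by
  rw [blockA_pow_two_mul]
  ext p
  simp [Matrix.mulVec_diagonal]

theorem span_top (N : ℕ) (hN : 1 ≤ N) (θs : Fin N → ℝ) (hinj : Function.Injective θs) :
    Submodule.span ℝ {v : Fin N × Fin 2 → ℝ | ∃ r ≤ 2 * N - 1,
        v = (blockA θs ^ r).mulVec (bstack 0) ∨
        v = (blockA θs ^ r).mulVec (bstack 1)} = ⊤ := by
  rw [eq_top_iff]
  rintro y -
  have hdet : (Matrix.vandermonde θs).det ≠ 0 := by
    rw [Ne, Matrix.det_vandermonde_eq_zero_iff]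
    rintro ⟨i, j, hij, hne⟩
    exact hne (hinj hij)
  have hsurj : Function.Surjective (Matrix.vandermonde θs).mulVec :=
    Matrix.mulVec_surjective_iff_isUnit.2 ((Matrix.isUnit_iff_isUnit_det _).2 (isUnit_iff_ne_zero.2 hdet))
  obtain ⟨c0, hc0⟩ := hsurj (fun j => y (j, 0))
  obtain ⟨c1, hc1⟩ := hsurj (fun j => y (j, 1))
  have key : y = ∑ k : Fin N, (c0 k • (blockA θs ^ (2 * (k : ℕ))).mulVec (bstack 0)
      + c1 k • (blockA θs ^ (2 * (k : ℕ))).mulVec (bstack 1)) := by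
    funext p
    obtain ⟨j, a⟩ := p
    have e0 := congrFun hc0 j
    have e1 := congrFun hc1 j
    simp only [Matrix.mulVec, dotProduct, Matrix.vandermonde] at e0 e1
    simp only [Finset.sum_apply, Pi.add_apply, Pi.smul_apply, blockA_pow_mulVec_bstack,
      bstack, smul_eq_mul]
    fin_cases a
    · simpa [mul_comm] using e0.symm.trans rfl
    · simpa [mul_comm] using e1.symm.trans rfl
  rw [key]
  refine Submodule.sum_mem _ fun k _ => Submodule.add_mem _ ?_ ?_ <;>
    refine Submodule.smul_mem _ _ (Submodule.subset_span ?_)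
  · exact ⟨2 * (k : ℕ), ⟨by have := k.isLt; omega, Or.inl rfl⟩⟩
  · exact ⟨2 * (k : ℕ), ⟨by have := k.isLt; omega, Or.inr rfl⟩⟩

def dotL {ι : Type*} [Fintype ι] (v : ι → ℝ) : (ι → ℝ) →L[ℝ] ℝ :=
  LinearMap.toContinuousLinearMap
    { toFun := fun w => v ⬝ᵥ w
      map_add' := fun a c => by simp [dotProduct, mul_add, Finset.sum_add_distrib]
      map_smul' := fun r a => by
        simp [dotProduct, Finset.mul_sum, mul_left_comm, mul_comm, mul_assoc] }

@[simp] lemma dotL_apply {ι : Type*} [Fintype ι] (v w : ι → ℝ) : dotL v w = v ⬝ᵥ w := rfl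

theorem exact_control {ι : Type*} [Fintype ι] [DecidableEq ι]
    (T : (ι → ℝ) →L[ℝ] (ι → ℝ)) (b : Fin 2 → ι → ℝ)
    (hv : ∀ v : ι → ℝ, (∀ (r : ℕ) (i : Fin 2), v ⬝ᵥ ((T ^ r) (b i)) = 0) → v = 0)
    (x0 ytar : ι → ℝ) :
    ∃ u : ℝ → EuclideanSpace ℝ (Fin 2),
      MemLp u 2 (volume.restrict (Icc (0 : ℝ) 1)) ∧
      ∃ x : ℝ → ι → ℝ, Continuous x ∧
        (∀ t ∈ Icc (0 : ℝ) 1,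
          x t = x0 + ∫ s in (0 : ℝ)..t, (T (x s) + u s 0 • b 0 + u s 1 • b 1)) ∧
        x 1 = ytar := by
  classical
  haveI : IsFiniteMeasure (volume.restrict (Icc (0:ℝ) 1)) := by
    constructor
    rw [Measure.restrict_apply_univ, Real.volume_Icc]
    exact ENNReal.ofReal_lt_top
  set P : ℝ → (ι → ℝ) →L[ℝ] (ι → ℝ) := fun s => NormedSpace.exp (s • T) with hPdef
  have hP : ∀ s, HasDerivAt P (T * P s) s := fun s => hasDerivAt_exp_smul_const' T s
  have hPcont : Continuous P :=
    continuous_iff_continuousAt.2 fun s => (hP s).continuousAt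
  have hPadd : ∀ a c : ℝ, P a * P c = P (a + c) := by
    intro a c
    rw [hPdef]
    simp only
    rw [add_smul,
      NormedSpace.exp_add_of_commute_of_mem_ball (𝕂 := ℝ) (((Commute.refl T).smul_left a).smul_right c)
        ((NormedSpace.expSeries_radius_eq_top ℝ ((ι → ℝ) →L[ℝ] (ι → ℝ))).symm ▸ edist_lt_top _ _)
        ((NormedSpace.expSeries_radius_eq_top ℝ ((ι → ℝ) →L[ℝ] (ι → ℝ))).symm ▸ edist_lt_top _ _)]
  have hP0 : P 0 = 1 := by simp [hPdef, exp_zero]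
  have hPP : ∀ (a c : ℝ) (y : ι → ℝ), P a (P c y) = P (a + c) y := by
    intro a c y
    rw [← hPadd a c]; rfl
  have hTP : ∀ s, T * P s = P s * T := fun s =>
    (((Commute.refl T).smul_right s).exp_right)
  set g : ℝ → Fin 2 → ι → ℝ := fun s i => P (1 - s) (b i) with hgdef
  have hgcont : ∀ i, Continuous fun s => g s i := fun i =>
    ((hPcont.comp (continuous_const.sub continuous_id)).clm_apply continuous_const)
  -- the Gramian
  set G : (ι → ℝ) → ℝ → ι → ℝ := fun v s => ∑ i : Fin 2, (v ⬝ᵥ g s i) • g s i with hGdef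
  have hGcont : ∀ v, Continuous (G v) := by
    intro v
    exact continuous_finset_sum _ fun i _ =>
      (((dotL v).continuous.comp (hgcont i)).smul (hgcont i))
  have hGint : ∀ v (a c : ℝ), IntervalIntegrable (G v) volume a c := fun v a c =>
    (hGcont v).intervalIntegrable a c
  set Gram : (ι → ℝ) →ₗ[ℝ] (ι → ℝ) :=
    { toFun := fun v => ∫ s in (0:ℝ)..1, G v s
      map_add' := by
        intro v w
        have hpt : G (v + w) = fun s => G v s + G w s := by
          funext s
          simp only [hGdef, add_dotProduct, add_smul, ← Finset.sum_add_distrib]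
        show (∫ s in (0:ℝ)..1, G (v + w) s) =
          (∫ s in (0:ℝ)..1, G v s) + ∫ s in (0:ℝ)..1, G w s
        rw [hpt]
        exact intervalIntegral.integral_add (hGint v 0 1) (hGint w 0 1)
      map_smul' := by
        intro r v
        have hpt : G (r • v) = fun s => r • G v s := by
          funext s
          simp only [hGdef, smul_dotProduct, smul_eq_mul, ← smul_smul, ← Finset.smul_sum]
        show (∫ s in (0:ℝ)..1, G (r • v) s) = r • ∫ s in (0:ℝ)..1, G v s
        rw [hpt, intervalIntegral.integral_smul] } with hGram
  have hGraminj : Function.Injective Gram := by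
    rw [injective_iff_map_eq_zero]
    intro v hv0
    -- the quadratic form vanishes
    have hqf : ∫ s in (0:ℝ)..1, (∑ i : Fin 2, (v ⬝ᵥ g s i) ^ 2) = 0 := by
      have h1 : dotL v (∫ s in (0:ℝ)..1, G v s) = 0 := by
        rw [show (∫ s in (0:ℝ)..1, G v s) = Gram v from rfl, hv0, map_zero]
      rw [← (dotL v).intervalIntegral_comp_comm (hGint v 0 1)] at h1
      have hpt : ∀ s, dotL v (G v s) = ∑ i : Fin 2, (v ⬝ᵥ g s i) ^ 2 := by
        intro s
        simp [hGdef, map_sum, _root_.map_smul, smul_eq_mul, sq, mul_comm]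
      calc (∫ s in (0:ℝ)..1, (∑ i : Fin 2, (v ⬝ᵥ g s i) ^ 2))
          = ∫ x in (0:ℝ)..1, dotL v (G v x) := by simp only [hpt]
        _ = 0 := h1
    have hcont2 : Continuous fun s => (∑ i : Fin 2, (v ⬝ᵥ g s i) ^ 2) :=
      continuous_finset_sum _ fun i _ => ((dotL v).continuous.comp (hgcont i)).pow 2
    have hzero : ∀ s ∈ Icc (0:ℝ) 1, ∀ i : Fin 2, v ⬝ᵥ g s i = 0 := by
      by_contra hcon
      push_neg at hcon
      obtain ⟨s0, hs0, i0, hne⟩ := hcon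
      have hpos : 0 < ∫ s in (0:ℝ)..1, (∑ i : Fin 2, (v ⬝ᵥ g s i) ^ 2) := by
        refine intervalIntegral.integral_pos one_pos ?_ ?_ ?_
        · exact hcont2.continuousOn
        · intro x _; positivity
        · refine ⟨s0, hs0, ?_⟩
          have : 0 < (v ⬝ᵥ g s0 i0) ^ 2 := by positivity
          calc 0 < (v ⬝ᵥ g s0 i0) ^ 2 := this
            _ ≤ ∑ i : Fin 2, (v ⬝ᵥ g s0 i) ^ 2 :=
              Finset.single_le_sum (f := fun i => (v ⬝ᵥ g s0 i) ^ 2) (fun i _ => sq_nonneg _) (Finset.mem_univ i0)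
      rw [hqf] at hpos
      exact lt_irrefl 0 hpos
    -- derivative cascade
    have key : ∀ (i : Fin 2) (r : ℕ), ∀ τ ∈ Icc (0:ℝ) 1, v ⬝ᵥ P τ ((T ^ r) (b i)) = 0 := by
      intro i
      have hF' : ∀ (r : ℕ) (τ : ℝ), HasDerivAt (fun σ => v ⬝ᵥ P σ ((T ^ r) (b i)))
          (v ⬝ᵥ P τ ((T ^ (r + 1)) (b i))) τ := by
        intro r τ
        set z := (T ^ r) (b i) with hz
        set Λ : ((ι → ℝ) →L[ℝ] (ι → ℝ)) →L[ℝ] ℝ :=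
          (dotL v).comp ((ContinuousLinearMap.apply ℝ (ι → ℝ)) z) with hΛ
        have h1 : HasDerivAt (fun σ => Λ (P σ)) ((0 : ((ι → ℝ) →L[ℝ] (ι → ℝ)) →L[ℝ] ℝ) (P τ) + Λ (T * P τ)) τ :=
          (hasDerivAt_const τ Λ).clm_apply (hP τ)
        have h2 : Λ (T * P τ) = v ⬝ᵥ P τ ((T ^ (r + 1)) (b i)) := by
          have : (T * P τ) z = P τ ((T ^ (r + 1)) (b i)) := by
            rw [hTP τ, pow_succ' T r]
            rfl
          simp [hΛ, ContinuousLinearMap.apply_apply, this]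
        rw [h2] at h1
        simpa [hΛ] using h1
      intro r
      induction r with
      | zero =>
        intro τ hτ
        have h := hzero (1 - τ) ⟨by linarith [hτ.2], by linarith [hτ.1]⟩ i
        simp only [hgdef] at h
        rw [show (1 : ℝ) - (1 - τ) = τ by ring] at h
        simpa using h
      | succ r ih =>
        have hIoo : ∀ τ ∈ Ioo (0:ℝ) 1, v ⬝ᵥ P τ ((T ^ (r + 1)) (b i)) = 0 := by
          intro τ hτ
          have hev : (fun σ => v ⬝ᵥ P σ ((T ^ r) (b i))) =ᶠ[𝓝 τ] fun _ => (0:ℝ) :=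
            eventually_of_mem (Icc_mem_nhds hτ.1 hτ.2) ih
          have h2 : HasDerivAt (fun σ => v ⬝ᵥ P σ ((T ^ r) (b i))) 0 τ :=
            (hasDerivAt_const τ (0:ℝ)).congr_of_eventuallyEq hev
          exact ((hF' r τ).unique h2)
        have hcl : Icc (0:ℝ) 1 ⊆ {τ | v ⬝ᵥ P τ ((T ^ (r + 1)) (b i)) = 0} := by
          have hcontF : Continuous fun τ => v ⬝ᵥ P τ ((T ^ (r + 1)) (b i)) :=
            continuous_iff_continuousAt.2 fun τ => (hF' (r+1) τ).continuousAt
          have h3 : closure (Ioo (0:ℝ) 1) ⊆ {τ | v ⬝ᵥ P τ ((T ^ (r + 1)) (b i)) = 0} :=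
            closure_minimal hIoo (isClosed_eq hcontF continuous_const)
          rw [closure_Ioo (by norm_num : (0:ℝ) ≠ 1)] at h3
          exact h3
        exact fun τ hτ => hcl hτ
    refine hv v fun r i => ?_
    have := key i r 0 ⟨le_refl _, zero_le_one⟩
    simpa [hP0] using this
  have hGramsurj : Function.Surjective Gram :=
    (LinearMap.injective_iff_surjective).1 hGraminj
  obtain ⟨v, hGv⟩ := hGramsurj (ytar - P 1 x0)
  -- the control
  set u : ℝ → EuclideanSpace ℝ (Fin 2) :=
    fun s => (EuclideanSpace.equiv (Fin 2) ℝ).symm (fun i => v ⬝ᵥ g s i) with hudef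
  have hucont : Continuous u :=
    (EuclideanSpace.equiv (Fin 2) ℝ).symm.continuous.comp
      (continuous_pi fun i => (dotL v).continuous.comp (hgcont i))
  have hui : ∀ s i, u s i = v ⬝ᵥ g s i := fun s i => rfl
  set w : ℝ → ι → ℝ := fun s => (v ⬝ᵥ g s 0) • b 0 + (v ⬝ᵥ g s 1) • b 1 with hwdef
  have hwcont : Continuous w :=
    (((dotL v).continuous.comp (hgcont 0)).smul continuous_const).add
      (((dotL v).continuous.comp (hgcont 1)).smul continuous_const)
  have hintg : Continuous fun s => P (-s) (w s) :=
    ((hPcont.comp continuous_neg).clm_apply hwcont)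
  set I : ℝ → ι → ℝ := fun t => ∫ s in (0:ℝ)..t, P (-s) (w s) with hIdef
  have hIcont : Continuous I :=
    intervalIntegral.continuous_primitive (fun a c => hintg.intervalIntegrable a c) 0
  set x : ℝ → ι → ℝ := fun t => P t (x0 + I t) with hxdef
  have hxcont : Continuous x := hPcont.clm_apply (continuous_const.add hIcont)
  have hI' : ∀ t, HasDerivAt I (P (-t) (w t)) t := by
    intro t
    exact intervalIntegral.integral_hasDerivAt_right (hintg.intervalIntegrable 0 t)
      hintg.stronglyMeasurable.stronglyMeasurableAtFilter
      hintg.continuousAt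
  have hx' : ∀ t, HasDerivAt x (T (x t) + w t) t := by
    intro t
    have hc : HasDerivAt (fun t => x0 + I t) (P (-t) (w t)) t := by
      simpa using (hI' t)
    have h1 : HasDerivAt x ((T * P t) (x0 + I t) + P t (P (-t) (w t))) t :=
      (hP t).clm_apply hc
    have h2 : (T * P t) (x0 + I t) = T (x t) := rfl
    have h3 : P t (P (-t) (w t)) = w t := by
      rw [hPP t (-t), add_neg_cancel, hP0]; rfl
    rwa [h2, h3] at h1
  have hx0 : x 0 = x0 := by
    simp [hxdef, hIdef, intervalIntegral.integral_same, hP0]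
  refine ⟨u, ?_, x, hxcont, ?_, ?_⟩
  · -- Memℒp
    obtain ⟨C, hC⟩ := isCompact_Icc.exists_bound_of_continuousOn hucont.continuousOn
    exact MemLp.of_bound hucont.aestronglyMeasurable C
      ((ae_restrict_iff' measurableSet_Icc).2 (ae_of_all _ hC))
  · -- integral equation
    intro t ht
    have hd : Continuous fun s => T (x s) + w s :=
      (T.continuous.comp hxcont).add hwcont
    have heq : ∫ s in (0:ℝ)..t, (T (x s) + w s) = x t - x 0 :=
      intervalIntegral.integral_eq_sub_of_hasDerivAt (fun s _ => hx' s)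
        (hd.intervalIntegrable 0 t)
    have hintgr : (fun s => T (x s) + u s 0 • b 0 + u s 1 • b 1) = fun s => T (x s) + w s := by
      funext s
      rw [hui, hui, hwdef]
      abel
    rw [hintgr, heq, hx0]
    abel
  · -- endpoint
    have e1 : x 1 = P 1 x0 + P 1 (I 1) := by rw [hxdef]; simp
    have e2 : P 1 (I 1) = ∫ s in (0:ℝ)..1, P 1 (P (-s) (w s)) :=
      ((P 1).intervalIntegral_comp_comm (hintg.intervalIntegrable 0 1)).symm
    have e3 : (fun s => P 1 (P (-s) (w s))) = G v := by
      funext s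
      rw [hPP 1 (-s)]
      show P (1 + -s) ((v ⬝ᵥ g s 0) • b 0 + (v ⬝ᵥ g s 1) • b 1) = _
      rw [map_add, _root_.map_smul, _root_.map_smul,
        show (1:ℝ) + -s = 1 - s by ring]
      simp [hGdef, Fin.sum_univ_two, hgdef]
    have e4 : (∫ s in (0:ℝ)..1, G v s) = ytar - P 1 x0 := hGv
    rw [e1, e2]
    rw [show (∫ s in (0:ℝ)..1, P 1 (P (-s) (w s))) = ∫ s in (0:ℝ)..1, G v s by rw [e3]]
    rw [e4]
    abel

theorem pow_apply_eq_mulVec {ι : Type*} [Fintype ι] [DecidableEq ι]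
    (M : Matrix ι ι ℝ) (r : ℕ) : ∀ y : ι → ℝ,
    ((LinearMap.toContinuousLinearMap M.mulVecLin) ^ r) y = (M ^ r).mulVec y := by
  induction r with
  | zero => intro y; simp [Matrix.one_mulVec]
  | succ r ih =>
    intro y
    rw [pow_succ, ContinuousLinearMap.mul_apply, ih]
    simp [Matrix.mulVec_mulVec, pow_succ]

end Aux

/-- for pairwise distinct parameters `θ₁,…,θ_N ∈ Θ = [θ_min,θ_max]`, the
stacked system on `ℝ^{2N}` satisfies the Kalman rank condition
`span{(A^N)^r 𝐛₁, (A^N)^r 𝐛₂ : 0 ≤ r ≤ 2N−1} = ℝ^{2N}`; consequently, for any target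
`y_tar ∈ ℝ^{2N}` and any initial state there exists a control
`ū ∈ L²([0,1],ℝ²)` steering the stacked system to `y_tar` at time `1`. -/
theorem kalman_rank_and_exact_controllability (N : ℕ) (hN : 1 ≤ N)
    (θmin θmax : ℝ) (θs : Fin N → ℝ)
    (hθ : ∀ j, θs j ∈ Icc θmin θmax) (hinj : Function.Injective θs) :
    (Submodule.span ℝ {v : Fin N × Fin 2 → ℝ | ∃ r ≤ 2 * N - 1,
        v = (blockA θs ^ r).mulVec (bstack 0) ∨
        v = (blockA θs ^ r).mulVec (bstack 1)} = ⊤) ∧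
    ∀ x0 ytar : Fin N × Fin 2 → ℝ,
      ∃ u : ℝ → EuclideanSpace ℝ (Fin 2),
        MemLp u 2 (volume.restrict (Icc (0 : ℝ) 1)) ∧
        ∃ x : ℝ → (Fin N × Fin 2 → ℝ), Continuous x ∧
          (∀ t ∈ Icc (0 : ℝ) 1,
            x t = x0 + ∫ s in (0 : ℝ)..t,
              ((blockA θs).mulVec (x s) + u s 0 • bstack 0 + u s 1 • bstack 1)) ∧
          x 1 = ytar := by
  have hspan := span_top N hN θs hinj
  refine ⟨hspan, fun x0 ytar => ?_⟩
  set T : ((Fin N × Fin 2) → ℝ) →L[ℝ] ((Fin N × Fin 2) → ℝ) :=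
    LinearMap.toContinuousLinearMap (blockA θs).mulVecLin with hT
  have hv : ∀ v : Fin N × Fin 2 → ℝ,
      (∀ (r : ℕ) (i : Fin 2), dotProduct v ((T ^ r) (bstack i)) = 0) → v = 0 := by
    intro v hd
    have hz : ∀ z ∈ Submodule.span ℝ {v : Fin N × Fin 2 → ℝ | ∃ r ≤ 2 * N - 1,
        v = (blockA θs ^ r).mulVec (bstack 0) ∨
        v = (blockA θs ^ r).mulVec (bstack 1)}, dotProduct v z = 0 := by
      intro z hzmem
      induction hzmem using Submodule.span_induction with
      | mem z hzS =>
        obtain ⟨r, -, hcase⟩ := hzS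
        rcases hcase with h | h
        · subst h
          have h0 := hd r 0
          rwa [pow_apply_eq_mulVec] at h0
        · subst h
          have h1 := hd r 1
          rwa [pow_apply_eq_mulVec] at h1
      | zero => simp
      | add a c _ _ ha hc => simp [dotProduct_add, ha, hc]
      | smul r a _ ha => simp [dotProduct_smul, ha]
    funext p
    have := hz (Pi.single p 1) (by rw [hspan]; trivial)
    simpa [dotProduct_single] using this
  obtain ⟨u, hu, x, hxcont, heq, hend⟩ := exact_control T (fun i => bstack i) hv x0 ytar
  refine ⟨u, hu, x, hxcont, ?_, hend⟩
  intro t ht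
  have := heq t ht
  simpa [hT] using this
end
end
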